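/- arXiv:1907.11120 — 8 statements merged into one kernel-verified Lean document; each statement's English description precedes it below -/
import Mathlib

section
/- Let Γ ⊆ Sym({1,…,n}) be a permutation group and let v, v̄ be irreducible Γ-arrangements of n points in ℝ^d with matrices M, M̄. If det(v,v̄) = det(M̄ᵀM) = 0, then the arrangement spaces of v and v̄ are orthogonal subspaces of ℝ^n. -/
open Matrix

/-- The matrix of an arrangement of `n` points in `ℝ^d`: the `i`-th row is the point `v i`. -/
def arrMat {n d : ℕ} (v : Fin n → Fin d → ℝ) : Matrix (Fin n) (Fin d) ℝ := Matrix.of v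

/-- An arrangement is normalized if `MᵀM` is the identity matrix. -/
def IsNormalized {n d : ℕ} (v : Fin n → Fin d → ℝ) : Prop :=
  (arrMat v)ᵀ * arrMat v = 1

/-- The arrangement space of `v`: the column span of its matrix, a subspace of `ℝ^n`. -/
def arrSpace {n d : ℕ} (v : Fin n → Fin d → ℝ) : Submodule ℝ (Fin n → ℝ) :=
  Submodule.span ℝ (Set.range (arrMat v)ᵀ)

/-- `detPair v w = det (M_wᵀ * M_v)`, i.e. `det(v, w̄) = det(M̄ᵀ M)` with `w` playing `v̄`. -/
noncomputable def detPair {n d : ℕ} (v w : Fin n → Fin d → ℝ) : ℝ :=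
  ((arrMat w)ᵀ * arrMat v).det

/-- Two subspaces `U, W ⊆ ℝ^n` are orthogonal if `⟨u, w⟩ = 0` for all `u ∈ U`, `w ∈ W`. -/
def OrthSpaces {n : ℕ} (U W : Submodule ℝ (Fin n → ℝ)) : Prop :=
  ∀ u ∈ U, ∀ w ∈ W, u ⬝ᵥ w = 0

/-- Arrangements are equivalent if related by an invertible linear map `X`. -/
def AreEquivalent {n d : ℕ} (v w : Fin n → Fin d → ℝ) : Prop :=
  ∃ X : Matrix (Fin d) (Fin d) ℝ, X.det ≠ 0 ∧ ∀ i, X.mulVec (v i) = w i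

/-- Arrangements are positively equivalent if related by a linear map of positive determinant. -/
def PosEquivalent {n d : ℕ} (v w : Fin n → Fin d → ℝ) : Prop :=
  ∃ X : Matrix (Fin d) (Fin d) ℝ, 0 < X.det ∧ ∀ i, X.mulVec (v i) = w i

/-- `T : Γ → O(ℝ^d)` is a representation: orthogonal values and multiplicative. -/
def IsRep {n d : ℕ} (Γ : Subgroup (Equiv.Perm (Fin n)))
    (T : Γ → Matrix (Fin d) (Fin d) ℝ) : Prop :=
  (∀ φ, (T φ)ᵀ * T φ = 1) ∧ (∀ φ ψ, T (φ * ψ) = T φ * T ψ)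

/-- `T` is a representation of the arrangement `v`: `T_φ v_i = v_{φ(i)}`. -/
def IsRepOf {n d : ℕ} (Γ : Subgroup (Equiv.Perm (Fin n)))
    (T : Γ → Matrix (Fin d) (Fin d) ℝ) (v : Fin n → Fin d → ℝ) : Prop :=
  IsRep Γ T ∧ ∀ (φ : Γ) (i : Fin n), (T φ).mulVec (v i) = v (φ.val i)

/-- `v` is a `Γ`-arrangement if it has a representation. -/
def IsGammaArr {n d : ℕ} (Γ : Subgroup (Equiv.Perm (Fin n)))
    (v : Fin n → Fin d → ℝ) : Prop :=
  ∃ T : Γ → Matrix (Fin d) (Fin d) ℝ, IsRepOf Γ T v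

/-- A representation is irreducible if the only invariant subspaces of `ℝ^d` are `⊥` and `⊤`. -/
def IrredRep {n d : ℕ} (Γ : Subgroup (Equiv.Perm (Fin n)))
    (T : Γ → Matrix (Fin d) (Fin d) ℝ) : Prop :=
  ∀ W : Submodule ℝ (Fin d → ℝ), (∀ (φ : Γ), ∀ x ∈ W, (T φ).mulVec x ∈ W) → W = ⊥ ∨ W = ⊤

/-- Representations are isomorphic: an invertible equivariant map exists. -/
def IsoReps {n d : ℕ} (Γ : Subgroup (Equiv.Perm (Fin n)))
    (T T' : Γ → Matrix (Fin d) (Fin d) ℝ) : Prop :=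
  ∃ R : Matrix (Fin d) (Fin d) ℝ, R.det ≠ 0 ∧ ∀ φ, R * T φ = T' φ * R

/-- Representations are positively isomorphic: an equivariant map with positive determinant. -/
def PosIsoReps {n d : ℕ} (Γ : Subgroup (Equiv.Perm (Fin n)))
    (T T' : Γ → Matrix (Fin d) (Fin d) ℝ) : Prop :=
  ∃ R : Matrix (Fin d) (Fin d) ℝ, 0 < R.det ∧ ∀ φ, R * T φ = T' φ * R

/-- `S_d(Γ)`: the set of normalized `Γ`-arrangements of `n` points in `ℝ^d`. -/
def SdSet (n d : ℕ) (Γ : Subgroup (Equiv.Perm (Fin n))) : Set (Fin n → Fin d → ℝ) :=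
  {v | IsNormalized v ∧ IsGammaArr Γ v}

/-- Deformation equivalence: a continuous path in `S_d(Γ)` from `v` to `w`. -/
def DeformEquiv {n d : ℕ} (Γ : Subgroup (Equiv.Perm (Fin n)))
    (v w : Fin n → Fin d → ℝ) : Prop :=
  ∃ c : ℝ → (Fin n → Fin d → ℝ), ContinuousOn c (Set.Icc 0 1) ∧
    (∀ t ∈ Set.Icc (0:ℝ) 1, c t ∈ SdSet n d Γ) ∧ c 0 = v ∧ c 1 = w

/-- `v` is flexible if it can be deformed into some non-equivalent arrangement. -/
def Flexible {n d : ℕ} (Γ : Subgroup (Equiv.Perm (Fin n))) (v : Fin n → Fin d → ℝ) : Prop :=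
  ∃ w : Fin n → Fin d → ℝ, DeformEquiv Γ v w ∧ ¬ AreEquivalent v w

/-- A subspace `W ⊆ ℝ^n` is `Γ`-invariant (under the permutation action). -/
def GammaInvariant {n : ℕ} (Γ : Subgroup (Equiv.Perm (Fin n)))
    (W : Submodule ℝ (Fin n → ℝ)) : Prop :=
  ∀ (φ : Γ), ∀ x ∈ W, (fun i => x (φ.val⁻¹ i)) ∈ W

theorem stmt2 {n d : ℕ} (Γ : Subgroup (Equiv.Perm (Fin n))) (v w : Fin n → Fin d → ℝ)
    (hv : ∃ T : Γ → Matrix (Fin d) (Fin d) ℝ, IsRepOf Γ T v ∧ IrredRep Γ T)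
    (hw : ∃ T : Γ → Matrix (Fin d) (Fin d) ℝ, IsRepOf Γ T w ∧ IrredRep Γ T)
    (h0 : detPair v w = 0) :
    OrthSpaces (arrSpace v) (arrSpace w) := by
  obtain ⟨T, ⟨⟨hTo, hTm⟩, hTv⟩, hTirr⟩ := hv
  obtain ⟨T', ⟨⟨hT'o, hT'm⟩, hT'w⟩, _⟩ := hw
  set X : Matrix (Fin d) (Fin d) ℝ := (arrMat w)ᵀ * arrMat v with hX
  -- equivariance : X * T φ = T' φ * X
  have hconj : ∀ φ : Γ, T' φ * X * (T φ)ᵀ = X := by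
    intro φ
    have h1 : arrMat v * (T φ)ᵀ = arrMat (fun i => v (φ.val i)) := by
      ext i j
      have := congrFun (hTv φ i) j
      simp only [Matrix.mulVec, dotProduct] at this
      simp only [Matrix.mul_apply, arrMat, Matrix.of_apply, Matrix.transpose_apply]
      rw [← this]
      exact Finset.sum_congr rfl fun k _ => mul_comm _ _
    have h2 : arrMat w * (T' φ)ᵀ = arrMat (fun i => w (φ.val i)) := by
      ext i j
      have := congrFun (hT'w φ i) j
      simp only [Matrix.mulVec, dotProduct] at this
      simp only [Matrix.mul_apply, arrMat, Matrix.of_apply, Matrix.transpose_apply]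
      rw [← this]
      exact Finset.sum_congr rfl fun k _ => mul_comm _ _
    have key : (arrMat (fun i => w (φ.val i)))ᵀ * arrMat (fun i => v (φ.val i)) = X := by
      ext a b
      simp only [Matrix.mul_apply, Matrix.transpose_apply, arrMat, Matrix.of_apply, hX]
      exact Fintype.sum_equiv φ.val _ _ (fun i => rfl)
    calc T' φ * X * (T φ)ᵀ
        = (arrMat w * (T' φ)ᵀ)ᵀ * (arrMat v * (T φ)ᵀ) := by
          simp only [hX, Matrix.transpose_mul, Matrix.transpose_transpose,
            Matrix.mul_assoc]
      _ = X := by rw [h1, h2, key]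
  have hequiv : ∀ φ : Γ, X * T φ = T' φ * X := by
    intro φ
    have := congrArg (fun A => A * T φ) (hconj φ)
    rw [Matrix.mul_assoc (T' φ * X), hTo φ, Matrix.mul_one] at this
    exact this.symm
  -- Schur : det X = 0 forces X = 0
  have hdet : X.det = 0 := h0
  obtain ⟨x, hx0, hxz⟩ := (Matrix.exists_mulVec_eq_zero_iff).mpr hdet
  have hker : ∀ y : Fin d → ℝ, X.mulVec y = 0 := by
    set K : Submodule ℝ (Fin d → ℝ) := LinearMap.ker X.mulVecLin with hK
    have hinv : ∀ (φ : Γ), ∀ z ∈ K, (T φ).mulVec z ∈ K := by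
      intro φ z hz
      have hz' : X.mulVec z = 0 := hz
      simp only [hK, LinearMap.mem_ker, Matrix.mulVecLin_apply]
      rw [Matrix.mulVec_mulVec, hequiv φ, ← Matrix.mulVec_mulVec, hz',
        Matrix.mulVec_zero]
    rcases hTirr K hinv with hbot | htop
    · exfalso
      apply hx0
      have : x ∈ K := hxz
      rw [hbot] at this
      exact this
    · intro y
      have : y ∈ K := by rw [htop]; trivial
      exact this
  have hXzero : ∀ a b, X a b = 0 := by
    intro a b
    have := congrFun (hker (Pi.single b 1)) a
    simpa [Matrix.mulVec_single] using this
  -- conclude orthogonality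
  intro u hu
  induction hu using Submodule.span_induction with
  | mem u hu =>
    obtain ⟨j, rfl⟩ := hu
    intro z hz
    induction hz using Submodule.span_induction with
    | mem z hz =>
      obtain ⟨k, rfl⟩ := hz
      have := hXzero k j
      simp only [hX, Matrix.mul_apply, Matrix.transpose_apply, arrMat, Matrix.of_apply] at this
      simp only [dotProduct, Matrix.transpose_apply, arrMat, Matrix.of_apply]
      rw [← this]
      exact Finset.sum_congr rfl fun i _ => mul_comm _ _
    | zero => simp
    | add a b _ _ ha hb => rw [dotProduct_add, ha, hb, add_zero]
    | smul c a _ ha => rw [dotProduct_smul, ha, smul_zero]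
  | zero => intro z hz; simp
  | add a b _ _ ha hb => intro z hz; rw [add_dotProduct, ha z hz, hb z hz, add_zero]
  | smul c a _ ha => intro z hz; rw [smul_dotProduct, ha z hz, smul_zero]
end

section
/- Let Γ ⊆ Sym({1,…,n}) be a permutation group and let v, v̄ be Γ-arrangements of n points in ℝ^d with matrices M, M̄ and representations T, T̄ respectively. If det(v,v̄) = det(M̄ᵀM) ≠ 0, then T and T̄ are isomorphic; if det(v,v̄) > 0, then T and T̄ are positively isomorphic. -/
open Matrix

lemma rep_one {n d : ℕ} {Γ : Subgroup (Equiv.Perm (Fin n))}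
    {T : Γ → Matrix (Fin d) (Fin d) ℝ} (hT : IsRep Γ T) : T 1 = 1 := by
  have h := hT.2 1 1
  rw [mul_one] at h
  calc T 1 = ((T 1)ᵀ * T 1) * T 1 := by rw [hT.1 1, one_mul]
  _ = (T 1)ᵀ * (T 1 * T 1) := by rw [Matrix.mul_assoc]
  _ = (T 1)ᵀ * T 1 := by rw [← h]
  _ = 1 := hT.1 1

lemma rep_inv {n d : ℕ} {Γ : Subgroup (Equiv.Perm (Fin n))}
    {T : Γ → Matrix (Fin d) (Fin d) ℝ} (hT : IsRep Γ T) (φ : Γ) : T φ⁻¹ = (T φ)ᵀ := by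
  have h1 : T φ⁻¹ * T φ = 1 := by rw [← hT.2, inv_mul_cancel, rep_one hT]
  have h2 : T φ * (T φ)ᵀ = 1 := mul_eq_one_comm.mp (hT.1 φ)
  calc T φ⁻¹ = T φ⁻¹ * (T φ * (T φ)ᵀ) := by rw [h2, mul_one]
  _ = (T φ⁻¹ * T φ) * (T φ)ᵀ := by rw [mul_assoc]
  _ = (T φ)ᵀ := by rw [h1, one_mul]

theorem stmt3 {n d : ℕ} (Γ : Subgroup (Equiv.Perm (Fin n))) (v w : Fin n → Fin d → ℝ)
    (T T' : Γ → Matrix (Fin d) (Fin d) ℝ)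
    (hT : IsRepOf Γ T v) (hT' : IsRepOf Γ T' w) :
    (detPair v w ≠ 0 → IsoReps Γ T T') ∧ (0 < detPair v w → PosIsoReps Γ T T') := by
  set R : Matrix (Fin d) (Fin d) ℝ := (arrMat w)ᵀ * arrMat v with hR
  have hdet : detPair v w = R.det := rfl
  have key : ∀ φ : Γ, R * T φ = T' φ * R := by
    intro φ
    have hv : ∀ i, (T φ)ᵀ.mulVec (v i) = v ((φ⁻¹ : Γ).val i) := by
      intro i; rw [← rep_inv hT.1 φ]; exact hT.2 φ⁻¹ i
    have hw : ∀ i, (T' φ).mulVec (w i) = w (φ.val i) := hT'.2 φ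
    ext a b
    have lhs : (R * T φ) a b = ∑ i, w i a * v ((φ⁻¹ : Γ).val i) b := by
      rw [hR, Matrix.mul_assoc, Matrix.mul_apply]
      congr 1
      ext i
      have h1 : (arrMat v * T φ) i b = ((T φ)ᵀ.mulVec (v i)) b := by
        simp [Matrix.mul_apply, Matrix.mulVec, dotProduct, arrMat, mul_comm]
      show (arrMat w)ᵀ a i * (arrMat v * T φ) i b = w i a * v ((φ⁻¹ : Γ).val i) b
      rw [h1, hv i]; rfl
    have rhs : (T' φ * R) a b = ∑ i, w (φ.val i) a * v i b := by
      rw [hR, ← Matrix.mul_assoc, Matrix.mul_apply]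
      congr 1
      ext i
      have h1 : (T' φ * (arrMat w)ᵀ) a i = ((T' φ).mulVec (w i)) a := by
        simp [Matrix.mul_apply, Matrix.mulVec, dotProduct, arrMat]
      show (T' φ * (arrMat w)ᵀ) a i * arrMat v i b = w (φ.val i) a * v i b
      rw [h1, hw i]; rfl
    rw [lhs, rhs]
    refine Fintype.sum_equiv ((φ⁻¹ : Γ).val : Equiv.Perm (Fin n)) _ _ ?_
    intro i
    have h2 : φ.val ((φ⁻¹ : Γ).val i) = i := by
      have h3 : (φ⁻¹ : Γ).val = (φ.val)⁻¹ := rfl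
      simp [h3]
    rw [h2]
  constructor
  · intro h; exact ⟨R, by rwa [hdet] at h, key⟩
  · intro h; exact ⟨R, by rwa [hdet] at h, key⟩
end

section
/- Let Γ ⊆ Sym({1,…,n}) be a permutation group and let v, v̄ ∈ S_d(Γ) be irreducible. If the arrangement spaces of v and v̄ are not orthogonal subspaces of ℝ^n, then the representations of v and v̄ are isomorphic. -/
open Matrix

theorem stmt4 {n d : ℕ} (Γ : Subgroup (Equiv.Perm (Fin n))) (v w : Fin n → Fin d → ℝ)
    (hv : v ∈ SdSet n d Γ) (hw : w ∈ SdSet n d Γ)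
    (T T' : Γ → Matrix (Fin d) (Fin d) ℝ)
    (hT : IsRepOf Γ T v) (hTirr : IrredRep Γ T)
    (hT' : IsRepOf Γ T' w) (hT'irr : IrredRep Γ T')
    (h : ¬ OrthSpaces (arrSpace v) (arrSpace w)) :
    IsoReps Γ T T' := by
  obtain ⟨⟨hTorth, hTmul⟩, hTv⟩ := hT
  obtain ⟨⟨hT'orth, hT'mul⟩, hT'w⟩ := hT'
  set R : Matrix (Fin d) (Fin d) ℝ := (arrMat w)ᵀ * arrMat v with hRdef
  -- T φ has two-sided inverse (T φ)ᵀ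
  have hTright : ∀ φ : Γ, T φ * (T φ)ᵀ = 1 := fun φ =>
    mul_eq_one_comm.mp (hTorth φ)
  have hT1 : T 1 = 1 := by
    have h1 : T 1 * T 1 = T 1 := by rw [← hTmul]; simp
    calc T 1 = T 1 * (T 1 * (T 1)ᵀ) := by rw [hTright]; simp
    _ = (T 1 * T 1) * (T 1)ᵀ := by rw [Matrix.mul_assoc]
    _ = T 1 * (T 1)ᵀ := by rw [h1]
    _ = 1 := hTright 1
  have hTinv : ∀ φ : Γ, T φ⁻¹ = (T φ)ᵀ := by
    intro φ
    calc T φ⁻¹ = T φ⁻¹ * (T φ * (T φ)ᵀ) := by rw [hTright]; simp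
    _ = (T φ⁻¹ * T φ) * (T φ)ᵀ := by rw [Matrix.mul_assoc]
    _ = (T φ)ᵀ := by rw [← hTmul, inv_mul_cancel, hT1, Matrix.one_mul]
  -- the intertwiner
  have hcomm : ∀ φ : Γ, R * T φ = T' φ * R := by
    intro φ
    ext a b
    have lhs : (R * T φ) a b = ∑ i, w i a * v ((φ⁻¹ : Γ).val i) b := by
      rw [Matrix.mul_apply]
      simp only [hRdef, Matrix.mul_apply, Matrix.transpose_apply, arrMat, Matrix.of_apply,
        Finset.sum_mul]
      rw [Finset.sum_comm]
      refine Finset.sum_congr rfl fun i _ => ?_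
      have hv' : (T φ⁻¹).mulVec (v i) = v ((φ⁻¹ : Γ).val i) := hTv φ⁻¹ i
      have : ∑ c, v i c * (T φ) c b = v ((φ⁻¹ : Γ).val i) b := by
        rw [← hv', hTinv, Matrix.mulVec, dotProduct]
        simp [Matrix.transpose_apply, mul_comm]
      calc ∑ c, w i a * v i c * (T φ) c b = w i a * ∑ c, v i c * (T φ) c b := by
            rw [Finset.mul_sum]; exact Finset.sum_congr rfl fun c _ => by ring
      _ = w i a * v ((φ⁻¹ : Γ).val i) b := by rw [this]
    have rhs : (T' φ * R) a b = ∑ i, w (φ.val i) a * v i b := by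
      rw [Matrix.mul_apply]
      simp only [hRdef, Matrix.mul_apply, Matrix.transpose_apply, arrMat, Matrix.of_apply,
        Finset.mul_sum]
      rw [Finset.sum_comm]
      refine Finset.sum_congr rfl fun i _ => ?_
      have hw' : (T' φ).mulVec (w i) = w (φ.val i) := hT'w φ i
      have : ∑ c, (T' φ) a c * w i c = w (φ.val i) a := by
        rw [← hw', Matrix.mulVec, dotProduct]
      calc ∑ c, (T' φ) a c * (w i c * v i b) = (∑ c, (T' φ) a c * w i c) * v i b := by
            rw [Finset.sum_mul]; exact Finset.sum_congr rfl fun c _ => by ring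
      _ = w (φ.val i) a * v i b := by rw [this]
    rw [lhs, rhs]
    rw [← Equiv.sum_comp (φ.val : Equiv.Perm (Fin n)) (fun i => w i a * v ((φ⁻¹ : Γ).val i) b)]
    refine Finset.sum_congr rfl fun i _ => ?_
    have hfix : (φ⁻¹ : Γ).val (φ.val i) = i := by
      show ((φ⁻¹ * φ : Γ).val) i = i
      rw [inv_mul_cancel]; rfl
    rw [hfix]
  -- R ≠ 0
  have hRne : R ≠ 0 := by
    intro h0
    apply h
    have key : ∀ x ∈ arrSpace w, ∀ j : Fin d, (fun i => v i j) ⬝ᵥ x = 0 := by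
      intro x hx j
      induction hx using Submodule.span_induction with
      | mem y hy =>
        obtain ⟨k, rfl⟩ := hy
        have := congrFun (congrFun h0 k) j
        simp only [hRdef, Matrix.mul_apply, Matrix.transpose_apply, arrMat, Matrix.of_apply,
          Matrix.zero_apply] at this
        simpa [dotProduct, Matrix.transpose_apply, arrMat, mul_comm] using this
      | zero => simp
      | add y z _ _ hy hz => rw [dotProduct_add, hy, hz, add_zero]
      | smul c y _ hy => rw [dotProduct_smul, hy, smul_zero]
    intro u hu x hx
    induction hu using Submodule.span_induction with
    | mem y hy => obtain ⟨j, rfl⟩ := hy; exact key x hx j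
    | zero => simp
    | add y z _ _ hy hz => rw [add_dotProduct, hy, hz, add_zero]
    | smul c y _ hy => rw [smul_dotProduct, hy, smul_zero]
  -- kernel of R is T-invariant, hence trivial
  have hkerinv : ∀ (φ : Γ), ∀ x ∈ LinearMap.ker R.mulVecLin,
      (T φ).mulVec x ∈ LinearMap.ker R.mulVecLin := by
    intro φ x hx
    simp only [LinearMap.mem_ker, Matrix.mulVecLin_apply] at hx ⊢
    rw [Matrix.mulVec_mulVec, hcomm φ, ← Matrix.mulVec_mulVec, hx, Matrix.mulVec_zero]
  rcases hTirr _ hkerinv with hbot | htop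
  · -- injective, so det ≠ 0
    refine ⟨R, ?_, hcomm⟩
    intro hdet
    obtain ⟨x, hx0, hx⟩ := Matrix.exists_mulVec_eq_zero_iff.mpr hdet
    have : x ∈ LinearMap.ker R.mulVecLin := by
      simp only [LinearMap.mem_ker, Matrix.mulVecLin_apply]; exact hx
    rw [hbot, Submodule.mem_bot] at this
    exact hx0 this
  · exfalso
    apply hRne
    ext a b
    have : Pi.single b (1 : ℝ) ∈ LinearMap.ker R.mulVecLin := htop ▸ Submodule.mem_top
    simp only [LinearMap.mem_ker, Matrix.mulVecLin_apply] at this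
    have := congrFun this a
    simpa [Matrix.mulVec_single] using this
end

section
/- Let Γ ⊆ Sym({1,…,n}) be a permutation group and T : Γ → O(ℝ^d) a representation. Then the set S_d⁺(T) = { v ∈ S_d(Γ) : v has a representation positively isomorphic to T } is an open subset of S_d(Γ) (in the subspace topology inherited from (ℝ^d)^n ≅ ℝ^{nd}). -/
open Matrix

section Aux

variable {n d : ℕ} {Γ : Subgroup (Equiv.Perm (Fin n))}

lemma aux_one {T : Γ → Matrix (Fin d) (Fin d) ℝ} (hT : IsRep Γ T) : T 1 = 1 := by
  have h1 : T 1 = T 1 * T 1 := by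
    have := hT.2 1 1; rwa [one_mul] at this
  have h2 : T 1 * (T 1)ᵀ = 1 := mul_eq_one_comm.mp (hT.1 1)
  calc T 1 = T 1 * (T 1 * (T 1)ᵀ) := by rw [h2, mul_one]
    _ = (T 1 * T 1) * (T 1)ᵀ := by rw [mul_assoc]
    _ = T 1 * (T 1)ᵀ := by rw [← h1]
    _ = 1 := h2

lemma aux_mulT {T : Γ → Matrix (Fin d) (Fin d) ℝ} (hT : IsRep Γ T) (φ : Γ) :
    T φ * (T φ)ᵀ = 1 := mul_eq_one_comm.mp (hT.1 φ)

lemma aux_inv {T : Γ → Matrix (Fin d) (Fin d) ℝ} (hT : IsRep Γ T) (φ : Γ) :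
    T φ⁻¹ = (T φ)ᵀ := by
  calc T φ⁻¹ = T φ⁻¹ * (T φ * (T φ)ᵀ) := by rw [aux_mulT hT, mul_one]
    _ = (T φ⁻¹ * T φ) * (T φ)ᵀ := by rw [mul_assoc]
    _ = T (φ⁻¹ * φ) * (T φ)ᵀ := by rw [hT.2]
    _ = (T φ)ᵀ := by rw [inv_mul_cancel, aux_one hT, one_mul]

/-- Uniqueness of the representation of a normalized arrangement. -/
lemma aux_uniq {v : Fin n → Fin d → ℝ} (hN : IsNormalized v)
    {T' : Γ → Matrix (Fin d) (Fin d) ℝ} (h : IsRepOf Γ T' v) (φ : Γ) :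
    T' φ = (arrMat fun i => v (φ.val i))ᵀ * arrMat v := by
  have key : T' φ * (arrMat v)ᵀ = (arrMat fun i => v (φ.val i))ᵀ := by
    ext k i
    have h2 := congrFun (h.2 φ i) k
    simp only [Matrix.mulVec, dotProduct] at h2
    simp only [Matrix.mul_apply, Matrix.transpose_apply, arrMat, Matrix.of_apply]
    exact h2
  calc T' φ = T' φ * ((arrMat v)ᵀ * arrMat v) := by rw [hN, mul_one]
    _ = (T' φ * (arrMat v)ᵀ) * arrMat v := by rw [Matrix.mul_assoc]
    _ = _ := by rw [key]

lemma aux_flip [Fintype Γ] {T T'' : Γ → Matrix (Fin d) (Fin d) ℝ} (hT : IsRep Γ T)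
    (hT'' : IsRep Γ T'') (R : Matrix (Fin d) (Fin d) ℝ) :
    ∑ φ : Γ, T'' φ * R * (T φ)ᵀ = ∑ φ : Γ, (T'' φ)ᵀ * R * T φ := by
  apply Fintype.sum_equiv (Equiv.inv Γ)
  intro φ
  rw [Equiv.inv_apply, aux_inv hT'', aux_inv hT, Matrix.transpose_transpose]

lemma aux_intertwine [Fintype Γ] {T T'' : Γ → Matrix (Fin d) (Fin d) ℝ} (hT : IsRep Γ T)
    (hT'' : IsRep Γ T'') (R : Matrix (Fin d) (Fin d) ℝ) (ψ : Γ) :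
    (∑ φ : Γ, T'' φ * R * (T φ)ᵀ) * T ψ = T'' ψ * ∑ φ : Γ, T'' φ * R * (T φ)ᵀ := by
  rw [Finset.sum_mul]
  conv_rhs => rw [aux_flip hT hT'' R, Finset.mul_sum]
  apply Fintype.sum_equiv ((Equiv.inv Γ).trans (Equiv.mulRight ψ))
  intro χ
  simp only [Equiv.trans_apply, Equiv.inv_apply, Equiv.coe_mulRight]
  have hA : (T'' (χ⁻¹ * ψ))ᵀ = (T'' ψ)ᵀ * T'' χ := by
    have h0 : T'' (χ⁻¹ * ψ) = (T'' χ)ᵀ * T'' ψ := by rw [hT''.2, aux_inv hT'']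
    rw [h0, Matrix.transpose_mul, Matrix.transpose_transpose]
  have hB : T (χ⁻¹ * ψ) = (T χ)ᵀ * T ψ := by rw [hT.2, aux_inv hT]
  rw [hA, hB]
  simp only [← mul_assoc]
  rw [aux_mulT hT'' ψ, one_mul]

end Aux

theorem stmt5 {n d : ℕ} (Γ : Subgroup (Equiv.Perm (Fin n)))
    (T : Γ → Matrix (Fin d) (Fin d) ℝ) (hT : IsRep Γ T) :
    IsOpen {x : {v : Fin n → Fin d → ℝ // v ∈ SdSet n d Γ} |
      ∃ T' : Γ → Matrix (Fin d) (Fin d) ℝ, IsRepOf Γ T' x.val ∧ PosIsoReps Γ T T'} := by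
  haveI : Fintype Γ := Fintype.ofFinite Γ
  rw [isOpen_iff_forall_mem_open]
  rintro x₀ ⟨T₀, hT₀, R₀, hR₀det, hR₀⟩
  refine ⟨{x : {v : Fin n → Fin d → ℝ // v ∈ SdSet n d Γ} |
      0 < (∑ φ : Γ, ((arrMat fun i => x.val (φ.val i))ᵀ * arrMat x.val) * R₀ * (T φ)ᵀ).det},
      ?_, ?_, ?_⟩
  · -- the detector set is contained in the target set
    rintro x hx
    obtain ⟨T'', hT''⟩ := x.2.2
    have huniq : ∀ φ : Γ, T'' φ = (arrMat fun i => x.val (φ.val i))ᵀ * arrMat x.val :=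
      aux_uniq x.2.1 hT''
    have hsum : (∑ φ : Γ, T'' φ * R₀ * (T φ)ᵀ) =
        ∑ φ : Γ, ((arrMat fun i => x.val (φ.val i))ᵀ * arrMat x.val) * R₀ * (T φ)ᵀ := by
      refine Finset.sum_congr rfl fun φ _ => ?_
      rw [huniq φ]
    refine ⟨T'', hT'', ∑ φ : Γ, T'' φ * R₀ * (T φ)ᵀ, ?_, aux_intertwine hT hT''.1 R₀⟩
    rw [hsum]
    exact hx
  · -- the detector set is open (determinant is continuous)
    have hc : Continuous fun (x : {v : Fin n → Fin d → ℝ // v ∈ SdSet n d Γ}) =>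
        (∑ φ : Γ, ((arrMat fun i => x.val (φ.val i))ᵀ * arrMat x.val) * R₀ * (T φ)ᵀ) := by
      apply continuous_finset_sum
      intro φ _
      have h1 : Continuous fun (x : {v : Fin n → Fin d → ℝ // v ∈ SdSet n d Γ}) =>
          (arrMat fun i => x.val (φ.val i)) := by
        refine continuous_matrix fun i j => ?_
        simp only [arrMat, Matrix.of_apply]
        exact (continuous_apply_apply _ j).comp continuous_subtype_val
      have h2 : Continuous fun (x : {v : Fin n → Fin d → ℝ // v ∈ SdSet n d Γ}) =>
          arrMat x.val := by
        refine continuous_matrix fun i j => ?_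
        simp only [arrMat, Matrix.of_apply]
        exact (continuous_apply_apply _ j).comp continuous_subtype_val
      exact ((h1.matrix_transpose.matrix_mul h2).matrix_mul continuous_const).matrix_mul
        continuous_const
    exact isOpen_lt continuous_const hc.matrix_det
  · -- x₀ belongs to the detector set
    have huniq : ∀ φ : Γ, T₀ φ = (arrMat fun i => x₀.val (φ.val i))ᵀ * arrMat x₀.val :=
      aux_uniq x₀.2.1 hT₀
    have hterm : ∀ φ : Γ,
        ((arrMat fun i => x₀.val (φ.val i))ᵀ * arrMat x₀.val) * R₀ * (T φ)ᵀ = R₀ := by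
      intro φ
      rw [← huniq φ, ← hR₀ φ, mul_assoc, aux_mulT hT, mul_one]
    simp only [Set.mem_setOf_eq]
    rw [Finset.sum_congr rfl fun φ _ => hterm φ, Finset.sum_const]
    rw [← Nat.cast_smul_eq_nsmul ℝ, Matrix.det_smul]
    have hcard : (0:ℝ) < ((Finset.univ : Finset Γ).card : ℝ) := by
      have : 0 < (Finset.univ : Finset Γ).card := Finset.card_pos.mpr ⟨1, Finset.mem_univ 1⟩
      exact_mod_cast this
    exact mul_pos (pow_pos hcard _) hR₀det
end

section
/- Let Γ ⊆ Sym({1,…,n}) be a permutation group. If v, v̄ ∈ S_d(Γ) are deformation equivalent, then the representations of v and v̄ are positively isomorphic. -/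
open Matrix

namespace Stmt6Aux

variable {n d : ℕ}

/-- The canonical representation matrices of a normalized arrangement. -/
noncomputable def Ttm (Γ : Subgroup (Equiv.Perm (Fin n))) (u : Fin n → Fin d → ℝ) (φ : Γ) :
    Matrix (Fin d) (Fin d) ℝ :=
  Matrix.of fun a b => ∑ j, u (φ.val j) a * u j b

lemma rep_eq (Γ : Subgroup (Equiv.Perm (Fin n))) (u : Fin n → Fin d → ℝ)
    (hu : IsNormalized u) (S : Γ → Matrix (Fin d) (Fin d) ℝ)
    (hS : IsRepOf Γ S u) (φ : Γ) : S φ = Ttm Γ u φ := by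
  have hu' : (arrMat u)ᵀ * arrMat u = 1 := hu
  have key : S φ * (arrMat u)ᵀ = Matrix.of fun a j => u (φ.val j) a := by
    ext a j
    have := congrFun (hS.2 φ j) a
    simpa [Matrix.mulVec, dotProduct, Matrix.mul_apply, Matrix.transpose_apply, arrMat] using this
  calc S φ = S φ * ((arrMat u)ᵀ * arrMat u) := by rw [hu', mul_one]
    _ = (S φ * (arrMat u)ᵀ) * arrMat u := (Matrix.mul_assoc _ _ _).symm
    _ = Ttm Γ u φ := by
        rw [key]; ext a b; simp [Matrix.mul_apply, arrMat, Ttm]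

lemma ttm_isRepOf (Γ : Subgroup (Equiv.Perm (Fin n))) (u : Fin n → Fin d → ℝ)
    (hu : u ∈ SdSet n d Γ) : IsRepOf Γ (Ttm Γ u) u := by
  obtain ⟨hnorm, S, hS⟩ := hu
  have h : Ttm Γ u = S := funext fun φ => (rep_eq Γ u hnorm S hS φ).symm
  rw [h]; exact hS

/-- The averaged intertwiner. -/
noncomputable def Rm (Γ : Subgroup (Equiv.Perm (Fin n))) [Fintype ↥Γ]
    (u u' : Fin n → Fin d → ℝ) : Matrix (Fin d) (Fin d) ℝ :=
  ∑ φ : Γ, Ttm Γ u φ * (Ttm Γ u' φ)ᵀ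

lemma inter (Γ : Subgroup (Equiv.Perm (Fin n))) [Fintype ↥Γ]
    {S S' : Γ → Matrix (Fin d) (Fin d) ℝ}
    (hS : IsRep Γ S) (hS' : IsRep Γ S') (ψ : Γ) :
    S' ψ * (∑ φ : Γ, S' φ * (S φ)ᵀ) = (∑ φ : Γ, S' φ * (S φ)ᵀ) * S ψ := by
  rw [Finset.mul_sum, Finset.sum_mul]
  have h1 : ∀ φ : Γ, S' ψ * (S' φ * (S φ)ᵀ) = S' (ψ * φ) * (S φ)ᵀ := by
    intro φ; rw [hS'.2, mul_assoc]
  simp_rw [h1]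
  refine Fintype.sum_equiv (Equiv.mulLeft ψ) _ _ ?_
  intro φ
  simp only [Equiv.coe_mulLeft]
  rw [hS.2 ψ φ, Matrix.transpose_mul, mul_assoc, mul_assoc, hS.1 ψ, mul_one]

lemma Rm_inter (Γ : Subgroup (Equiv.Perm (Fin n))) [Fintype ↥Γ]
    {u u' : Fin n → Fin d → ℝ} (hu : u ∈ SdSet n d Γ) (hu' : u' ∈ SdSet n d Γ) (ψ : Γ) :
    Ttm Γ u' ψ * Rm Γ u' u = Rm Γ u' u * Ttm Γ u ψ :=
  inter Γ (ttm_isRepOf Γ u hu).1 (ttm_isRepOf Γ u' hu').1 ψ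

lemma Rm_self_det_pos (Γ : Subgroup (Equiv.Perm (Fin n))) [Fintype ↥Γ]
    (u : Fin n → Fin d → ℝ) (hu : u ∈ SdSet n d Γ) : 0 < (Rm Γ u u).det := by
  have hrep := (ttm_isRepOf Γ u hu).1
  have h1 : ∀ φ : Γ, Ttm Γ u φ * (Ttm Γ u φ)ᵀ = 1 := fun φ =>
    mul_eq_one_comm.mp (hrep.1 φ)
  have h2 : Rm Γ u u = (Fintype.card ↥Γ : ℝ) • (1 : Matrix (Fin d) (Fin d) ℝ) := by
    unfold Rm
    simp only [h1, Finset.sum_const, Finset.card_univ]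
    rw [Nat.cast_smul_eq_nsmul]
  rw [h2, Matrix.det_smul, Matrix.det_one, mul_one, Fintype.card_fin]
  exact pow_pos (by exact_mod_cast Fintype.card_pos) d

lemma ttm_entry_cont (Γ : Subgroup (Equiv.Perm (Fin n))) (φ : Γ) (a b : Fin d) :
    Continuous fun u : Fin n → Fin d → ℝ => Ttm Γ u φ a b := by
  simp only [Ttm, Matrix.of_apply]
  apply continuous_finset_sum
  intro j _
  fun_prop

lemma Rm_det_cont (Γ : Subgroup (Equiv.Perm (Fin n))) [Fintype ↥Γ] :
    Continuous fun p : (Fin n → Fin d → ℝ) × (Fin n → Fin d → ℝ) => (Rm Γ p.1 p.2).det := by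
  apply Continuous.matrix_det
  apply continuous_finset_sum
  intro φ _
  apply continuous_matrix
  intro a b
  simp only [Matrix.mul_apply, Matrix.transpose_apply]
  apply continuous_finset_sum
  intro k _
  exact ((ttm_entry_cont Γ φ a k).comp continuous_fst).mul
    ((ttm_entry_cont Γ φ b k).comp continuous_snd)

lemma delta_lemma (Γ : Subgroup (Equiv.Perm (Fin n))) [Fintype ↥Γ]
    (c : ℝ → Fin n → Fin d → ℝ)
    (hc : ContinuousOn c (Set.Icc 0 1)) (hmem : ∀ t ∈ Set.Icc (0:ℝ) 1, c t ∈ SdSet n d Γ)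
    (s : ℝ) (hs : s ∈ Set.Icc (0:ℝ) 1) :
    ∃ δ > 0, ∀ t ∈ Set.Icc (0:ℝ) 1, |t - s| < δ →
      0 < (Rm Γ (c s) (c t)).det ∧ 0 < (Rm Γ (c t) (c s)).det := by
  have hpos : 0 < (Rm Γ (c s) (c s)).det := Rm_self_det_pos Γ (c s) (hmem s hs)
  have hcw : ContinuousWithinAt c (Set.Icc 0 1) s := hc s hs
  have hcw1 : ContinuousWithinAt (fun t => (Rm Γ (c s) (c t)).det) (Set.Icc 0 1) s :=
    ((Rm_det_cont Γ).comp_continuousOn (f := fun t => (c s, c t)) (continuousOn_const.prodMk hc)) s hs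
  have hcw2 : ContinuousWithinAt (fun t => (Rm Γ (c t) (c s)).det) (Set.Icc 0 1) s :=
    ((Rm_det_cont Γ).comp_continuousOn (f := fun t => (c t, c s)) (hc.prodMk continuousOn_const)) s hs
  have hev1 : ∀ᶠ t in nhdsWithin s (Set.Icc 0 1), 0 < (Rm Γ (c s) (c t)).det :=
    hcw1 (Ioi_mem_nhds hpos)
  have hev2 : ∀ᶠ t in nhdsWithin s (Set.Icc 0 1), 0 < (Rm Γ (c t) (c s)).det :=
    hcw2 (Ioi_mem_nhds hpos)
  have hev := hev1.and hev2
  rw [Filter.eventually_iff, Metric.mem_nhdsWithin_iff] at hev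
  obtain ⟨δ, hδ, h⟩ := hev
  exact ⟨δ, hδ, fun t ht habs =>
    h ⟨by rwa [Metric.mem_ball, Real.dist_eq], ht⟩⟩

end Stmt6Aux

open Stmt6Aux in
theorem stmt6 {n d : ℕ} (Γ : Subgroup (Equiv.Perm (Fin n))) (v w : Fin n → Fin d → ℝ)
    (hv : v ∈ SdSet n d Γ) (hw : w ∈ SdSet n d Γ)
    (hdeform : DeformEquiv Γ v w)
    (T T' : Γ → Matrix (Fin d) (Fin d) ℝ)
    (hT : IsRepOf Γ T v) (hT' : IsRepOf Γ T' w) :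
    PosIsoReps Γ T T' := by
  classical
  obtain ⟨c, hc, hmem, hc0, hc1⟩ := hdeform
  haveI : Fintype ↥Γ := Fintype.ofFinite _
  have h01 : (0:ℝ) ∈ Set.Icc (0:ℝ) 1 := by norm_num
  have h11 : (1:ℝ) ∈ Set.Icc (0:ℝ) 1 := by norm_num
  have hTeq : T = Ttm Γ (c 0) := by
    funext φ; rw [hc0]; exact rep_eq Γ v hv.1 T hT φ
  have hT'eq : T' = Ttm Γ (c 1) := by
    funext φ; rw [hc1]; exact rep_eq Γ w hw.1 T' hT' φ
  rw [hTeq, hT'eq]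
  set A : Set ℝ := {t | t ∈ Set.Icc (0:ℝ) 1 ∧ PosIsoReps Γ (Ttm Γ (c 0)) (Ttm Γ (c t))} with hA
  have h0A : (0:ℝ) ∈ A :=
    ⟨h01, 1, by simp, fun φ => by rw [one_mul, mul_one]⟩
  have hbdd : BddAbove A := ⟨1, fun t ht => ht.1.2⟩
  have hne : A.Nonempty := ⟨0, h0A⟩
  set τ := sSup A with hτdef
  have hτ0 : 0 ≤ τ := le_csSup hbdd h0A
  have hτ1 : τ ≤ 1 := csSup_le hne fun t ht => ht.1.2
  have hτI : τ ∈ Set.Icc (0:ℝ) 1 := ⟨hτ0, hτ1⟩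
  obtain ⟨δ, hδ, hdet⟩ := delta_lemma Γ c hc hmem τ hτI
  have comp : ∀ s t : ℝ, s ∈ Set.Icc (0:ℝ) 1 → t ∈ Set.Icc (0:ℝ) 1 →
      0 < (Rm Γ (c t) (c s)).det →
      PosIsoReps Γ (Ttm Γ (c 0)) (Ttm Γ (c s)) →
      PosIsoReps Γ (Ttm Γ (c 0)) (Ttm Γ (c t)) := by
    rintro s t hsI htI hpos ⟨R0, hR0pos, hR0⟩
    refine ⟨Rm Γ (c t) (c s) * R0, by rw [Matrix.det_mul]; exact mul_pos hpos hR0pos, ?_⟩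
    intro φ
    have hint := Rm_inter Γ (hmem s hsI) (hmem t htI) φ
    rw [mul_assoc, hR0 φ, ← mul_assoc, ← hint, mul_assoc]
  have hτA : τ ∈ A := by
    rcases exists_lt_of_lt_csSup hne (show τ - δ < τ by linarith) with ⟨t', ht'A, ht'⟩
    have ht'le : t' ≤ τ := le_csSup hbdd ht'A
    have habs : |t' - τ| < δ := by
      rw [abs_sub_lt_iff]; constructor <;> linarith
    exact ⟨hτI, comp t' τ ht'A.1 hτI (hdet t' ht'A.1 habs).1 ht'A.2⟩
  have hτeq1 : τ = 1 := by
    by_contra h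
    have hlt : τ < 1 := lt_of_le_of_ne hτ1 h
    set t := min 1 (τ + δ/2) with ht
    have htI : t ∈ Set.Icc (0:ℝ) 1 := ⟨le_min (by norm_num) (by linarith), min_le_left _ _⟩
    have hτt : τ < t := lt_min hlt (by linarith)
    have habs : |t - τ| < δ := by
      have h2 : t ≤ τ + δ/2 := min_le_right _ _
      rw [abs_sub_lt_iff]; constructor <;> linarith
    have htA : t ∈ A := ⟨htI, comp τ t hτI htI (hdet t htI habs).2 hτA.2⟩
    have := le_csSup hbdd htA
    linarith
  exact hτeq1 ▸ hτA.2
end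

section
/- Let Γ ⊆ Sym({1,…,n}) be a permutation group and let v, v̄ ∈ S_d(Γ) be irreducible arrangements that are not equivalent. If the representations of v and v̄ are positively isomorphic, then v and v̄ are deformation equivalent. -/
set_option maxRecDepth 4000


open Matrix

open Matrix Real

section SO
variable {d : ℕ}

lemma vmv_mul (x y z w : Fin d → ℝ) :
    vecMulVec x y * vecMulVec z w = (y ⬝ᵥ z) • vecMulVec x w := by
  ext i j
  simp only [Matrix.mul_apply, vecMulVec_apply, Matrix.smul_apply, smul_eq_mul, dotProduct,
    Finset.sum_mul]
  exact Finset.sum_congr rfl fun k _ => by ring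

lemma vmv_mulVec (x y z : Fin d → ℝ) :
    vecMulVec x y *ᵥ z = (y ⬝ᵥ z) • x := by
  funext i
  simp only [mulVec, vecMulVec_apply, dotProduct, Pi.smul_apply, smul_eq_mul, Finset.sum_mul]
  exact Finset.sum_congr rfl fun k _ => by ring

lemma vmv_transpose (x y : Fin d → ℝ) : (vecMulVec x y)ᵀ = vecMulVec y x := by
  ext i j; simp [vecMulVec_apply, mul_comm]

/-- Rotation by "angle" (c,s) in the plane spanned by orthonormal u, p. -/
noncomputable def rotM (u p : Fin d → ℝ) (c s : ℝ) : Matrix (Fin d) (Fin d) ℝ :=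
  1 + (c - 1) • (vecMulVec u u + vecMulVec p p) + s • (vecMulVec p u - vecMulVec u p)

variable {u p : Fin d → ℝ} (hu : u ⬝ᵥ u = 1) (hp : p ⬝ᵥ p = 1) (hup : u ⬝ᵥ p = 0)

include hu hp hup in
lemma rotM_orth {c s : ℝ} (hcs : c * c + s * s = 1) :
    (rotM u p c s)ᵀ * rotM u p c s = 1 := by
  have hpu : p ⬝ᵥ u = 0 := by rwa [dotProduct_comm]
  set A := vecMulVec u u + vecMulVec p p with hA
  set B := vecMulVec p u - vecMulVec u p with hB
  have hA2 : A * A = A := by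
    simp [hA, add_mul, mul_add, vmv_mul, hu, hp, hup, hpu]
  have hB2 : B * B = -A := by
    simp only [hA, hB, sub_mul, mul_sub, vmv_mul, hu, hp, hup, hpu, zero_smul, one_smul]
    abel
  have hAB : A * B = B := by
    rw [hA, hB, add_mul, mul_sub, mul_sub, vmv_mul, vmv_mul, vmv_mul, vmv_mul, hu, hp, hup, hpu]
    simp only [zero_smul, one_smul]
    abel
  have hBA : B * A = B := by
    rw [hA, hB, sub_mul, mul_add, mul_add, vmv_mul, vmv_mul, vmv_mul, vmv_mul, hu, hp, hup, hpu]
    simp only [zero_smul, one_smul]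
    abel
  have hR : ∀ c' s' : ℝ, rotM u p c' s' = 1 + (c' - 1) • A + s' • B := fun _ _ => by
    rw [rotM, hA, hB]
  have hAT : Aᵀ = A := by
    rw [hA]; simp only [transpose_add, vmv_transpose]
  have hBT : Bᵀ = -B := by
    rw [hB]; simp only [transpose_sub, vmv_transpose]; rw [neg_sub]
  have hT : (rotM u p c s)ᵀ = 1 + (c - 1) • A + (-s) • B := by
    rw [hR c s]
    simp only [transpose_add, transpose_smul, transpose_one, hAT, hBT, smul_neg, neg_smul]
  rw [hT, hR c s]
  have expand : (1 + (c - 1) • A + (-s) • B) * (1 + (c - 1) • A + s • B)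
      = 1 + ((c-1)*(c-1) + 2*(c-1) + s*s) • A := by
    simp only [add_mul, mul_add, one_mul, mul_one, smul_mul_assoc, mul_smul_comm, smul_smul,
      hA2, hB2, hAB, hBA, smul_neg]
    module
  rw [expand, show (c-1)*(c-1) + 2*(c-1) + s*s = c*c + s*s - 1 by ring, hcs]
  simp

include hu hp hup in
lemma rotM_mulVec_u (c s : ℝ) : rotM u p c s *ᵥ u = c • u + s • p := by
  have hpu : p ⬝ᵥ u = 0 := by rwa [dotProduct_comm]
  simp only [rotM, add_mulVec, smul_mulVec, one_mulVec, sub_mulVec, vmv_mulVec, hu, hpu,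
    zero_smul, one_smul, add_zero, sub_zero]
  module

lemma rotM_mulVec_fix {x : Fin d → ℝ} (hux : u ⬝ᵥ x = 0) (hpx : p ⬝ᵥ x = 0) (c s : ℝ) :
    rotM u p c s *ᵥ x = x := by
  simp [rotM, add_mulVec, smul_mulVec, one_mulVec, sub_mulVec, vmv_mulVec, hux, hpx]

lemma rotM_continuous (θ : ℝ) :
    Continuous fun t : ℝ => rotM u p (Real.cos (t * θ)) (Real.sin (t * θ)) := by
  unfold rotM
  apply Continuous.add
  · apply Continuous.add continuous_const
    exact Continuous.smul (f := fun t : ℝ => Real.cos (t * θ) - 1) (by fun_prop) continuous_const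
  · exact Continuous.smul (f := fun t : ℝ => Real.sin (t * θ)) (by fun_prop) continuous_const

lemma rotM_one : rotM u p 1 0 = 1 := by
  simp [rotM]

/-- standard basis vector -/
def eb {d : ℕ} (j : Fin d) : Fin d → ℝ := Pi.single j 1

lemma eb_self (j : Fin d) : eb j ⬝ᵥ eb j = 1 := by
  simp [eb, dotProduct_single]

lemma eb_ne {j k : Fin d} (h : j ≠ k) : eb j ⬝ᵥ eb k = 0 := by
  simp [eb, dotProduct_single, Pi.single_eq_of_ne (Ne.symm h)]

lemma orth_dot {O : Matrix (Fin d) (Fin d) ℝ} (hO : Oᵀ * O = 1) (x y : Fin d → ℝ) :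
    (O *ᵥ x) ⬝ᵥ (O *ᵥ y) = x ⬝ᵥ y := by
  have h1 : O *ᵥ x = x ᵥ* Oᵀ := by
    have h := Matrix.mulVec_transpose Oᵀ x
    rw [transpose_transpose] at h
    exact h
  rw [dotProduct_mulVec, h1, Matrix.vecMul_vecMul, hO, Matrix.vecMul_one]

lemma so_step (k : Fin d) (hk1 : (k : ℕ) + 1 < d) {Q : Matrix (Fin d) (Fin d) ℝ}
    (hQ : Qᵀ * Q = 1) (hfix : ∀ j : Fin d, j < k → Q *ᵥ eb j = eb j) :
    ∃ Q', JoinedIn {O : Matrix (Fin d) (Fin d) ℝ | Oᵀ * O = 1} Q Q' ∧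
      ∀ j : Fin d, j ≤ k → Q' *ᵥ eb j = eb j := by
  set u := Q *ᵥ eb k with hudef
  have hu : u ⬝ᵥ u = 1 := by rw [hudef, orth_dot hQ, eb_self]
  have huj : ∀ j : Fin d, j < k → u ⬝ᵥ eb j = 0 := by
    intro j hj
    rw [hudef]
    conv_lhs => rw [← hfix j hj]
    rw [orth_dot hQ]
    exact eb_ne (ne_of_gt hj)
  by_cases hue : u = eb k
  · refine ⟨Q, JoinedIn.refl hQ, fun j hj => hj.lt_or_eq.elim (hfix j) ?_⟩
    rintro rfl
    rw [← hudef, hue]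
  · set c := eb k ⬝ᵥ u with hcdef
    set r := eb k - c • u with hrdef
    have hrsq : r ⬝ᵥ r = 1 - c * c := by
      simp only [hrdef, dotProduct_sub, sub_dotProduct, dotProduct_smul, smul_dotProduct,
        smul_eq_mul, hu, mul_one]
      rw [eb_self, dotProduct_comm u (eb k), ← hcdef]
      ring
    obtain ⟨p, c', s, hp, hup, hpj, hcs, hs, hend⟩ :
        ∃ (p : Fin d → ℝ) (c' s : ℝ), p ⬝ᵥ p = 1 ∧ u ⬝ᵥ p = 0 ∧
          (∀ j : Fin d, j < k → p ⬝ᵥ eb j = 0) ∧ c' * c' + s * s = 1 ∧ 0 ≤ s ∧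
          c' • u + s • p = eb k := by
      by_cases hr0 : r = 0
      · set k' : Fin d := ⟨(k : ℕ) + 1, hk1⟩ with hk'
        have hk'v : (k' : ℕ) = (k : ℕ) + 1 := rfl
        have hkk' : k ≠ k' := Fin.ne_of_val_ne (by omega)
        refine ⟨Q *ᵥ eb k', c, 0, ?_, ?_, ?_, ?_, le_refl 0, ?_⟩
        · rw [orth_dot hQ, eb_self]
        · rw [hudef, orth_dot hQ]; exact eb_ne hkk'
        · intro j hj
          conv_lhs => rw [← hfix j hj]
          rw [orth_dot hQ]
          have hjv : (j : ℕ) < (k : ℕ) := hj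
          exact eb_ne (Fin.ne_of_val_ne (by omega))
        · have h0 : (0:ℝ) = 1 - c * c := by
            rw [← hrsq, hr0, zero_dotProduct]
          linarith
        · have h1 : eb k - c • u = 0 := by rw [← hrdef, hr0]
          rw [zero_smul, add_zero]
          exact (sub_eq_zero.mp h1).symm
      · have hrr0 : 0 < r ⬝ᵥ r := by
          rcases lt_or_eq_of_le (Finset.sum_nonneg fun i _ => mul_self_nonneg (r i) :
            (0:ℝ) ≤ r ⬝ᵥ r) with h | h
          · exact h
          · exact absurd (dotProduct_self_eq_zero.mp h.symm) hr0
        set s := Real.sqrt (r ⬝ᵥ r) with hsdef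
        have hs0 : 0 < s := Real.sqrt_pos.mpr hrr0
        have hss : s * s = r ⬝ᵥ r := Real.mul_self_sqrt hrr0.le
        have hur : u ⬝ᵥ r = 0 := by
          simp only [hrdef, dotProduct_sub, dotProduct_smul, smul_eq_mul, hu, mul_one]
          rw [dotProduct_comm u (eb k), ← hcdef, sub_self]
        refine ⟨s⁻¹ • r, c, s, ?_, ?_, ?_, ?_, hs0.le, ?_⟩
        · simp only [dotProduct_smul, smul_dotProduct, smul_eq_mul]
          rw [← hss]; field_simp
        · simp only [dotProduct_smul, smul_eq_mul, hur, mul_zero]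
        · intro j hj
          simp only [smul_dotProduct, smul_eq_mul]
          have hre : r ⬝ᵥ eb j = 0 := by
            simp only [hrdef, sub_dotProduct, smul_dotProduct, smul_eq_mul]
            rw [eb_ne (ne_of_gt hj), huj j hj, mul_zero, sub_zero]
          rw [hre, mul_zero]
        · rw [hss, hrsq]; ring
        · rw [smul_smul, mul_inv_cancel₀ hs0.ne', one_smul, hrdef]
          module
    -- common part
    have hpu : p ⬝ᵥ u = 0 := by rw [dotProduct_comm]; exact hup
    have hc1 : -1 ≤ c' ∧ c' ≤ 1 := by
      constructor <;> nlinarith [mul_self_nonneg s, sq_nonneg (c' + 1), sq_nonneg (c' - 1)]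
    set θ := Real.arccos c' with hθ
    have hcost : Real.cos θ = c' := Real.cos_arccos hc1.1 hc1.2
    have hsint : Real.sin θ = s := by
      rw [hθ, Real.sin_arccos, show 1 - c' ^ 2 = s * s by nlinarith, Real.sqrt_mul_self hs]
    set γ : ℝ → Matrix (Fin d) (Fin d) ℝ :=
      fun τ => rotM u p (Real.cos (τ * θ)) (Real.sin (τ * θ)) * Q with hγ
    have hγorth : ∀ τ : ℝ, (γ τ)ᵀ * γ τ = 1 := by
      intro τ
      have hrot := rotM_orth hu hp hup
        (show Real.cos (τ*θ) * Real.cos (τ*θ) + Real.sin (τ*θ) * Real.sin (τ*θ) = 1 by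
          have := Real.sin_sq_add_cos_sq (τ*θ); nlinarith)
      rw [hγ, transpose_mul,
        show Qᵀ * (rotM u p (Real.cos (τ*θ)) (Real.sin (τ*θ)))ᵀ *
            (rotM u p (Real.cos (τ*θ)) (Real.sin (τ*θ)) * Q)
          = Qᵀ * ((rotM u p (Real.cos (τ*θ)) (Real.sin (τ*θ)))ᵀ *
            rotM u p (Real.cos (τ*θ)) (Real.sin (τ*θ))) * Q by noncomm_ring,
        hrot, Matrix.mul_one, hQ]
    have hγ0 : γ 0 = Q := by
      rw [hγ]
      simp only [zero_mul, Real.cos_zero, Real.sin_zero]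
      rw [rotM_one, Matrix.one_mul]
    have hγcont : Continuous γ := (rotM_continuous θ).matrix_mul continuous_const
    refine ⟨γ 1, ⟨⟨⟨fun t : unitInterval => γ t, hγcont.comp continuous_subtype_val⟩,
      by simp [hγ0], rfl⟩, fun t => hγorth t⟩, ?_⟩
    intro j hj
    rcases hj.lt_or_eq with hj' | rfl
    · rw [hγ, ← mulVec_mulVec, hfix j hj', rotM_mulVec_fix (huj j hj') (hpj j hj')]
    · rw [hγ, ← mulVec_mulVec, ← hudef, rotM_mulVec_u hu hp hup, one_mul, hcost, hsint, hend]

lemma so_iterate (m : ℕ) (hm : m + 1 ≤ d) {Q : Matrix (Fin d) (Fin d) ℝ} (hQ : Qᵀ * Q = 1) :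
    ∃ Q', JoinedIn {O : Matrix (Fin d) (Fin d) ℝ | Oᵀ * O = 1} Q Q' ∧
      ∀ j : Fin d, (j : ℕ) < m → Q' *ᵥ eb j = eb j := by
  induction m with
  | zero => exact ⟨Q, JoinedIn.refl hQ, fun j hj => absurd hj (by omega)⟩
  | succ m ih =>
    obtain ⟨Q1, hJ1, hfix1⟩ := ih (by omega)
    have hQ1 : Q1ᵀ * Q1 = 1 := hJ1.target_mem
    obtain ⟨Q2, hJ2, hfix2⟩ := so_step ⟨m, by omega⟩ (by simpa using hm) hQ1
      (fun j hj => hfix1 j hj)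
    refine ⟨Q2, hJ1.trans hJ2, fun j hj => hfix2 j ?_⟩
    refine Fin.le_def.mpr ?_
    show (j : ℕ) ≤ m
    omega

lemma joined_det_pos {Q D : Matrix (Fin d) (Fin d) ℝ}
    (hJ : JoinedIn {O : Matrix (Fin d) (Fin d) ℝ | Oᵀ * O = 1} Q D) (h0 : 0 < Q.det) :
    0 < D.det := by
  obtain ⟨γ, hγ⟩ := hJ
  have hne : ∀ r : ℝ, (γ.extend r).det ≠ 0 := by
    intro r
    have hm : (γ.extend r)ᵀ * γ.extend r = 1 := by
      rw [Path.extend, ContinuousMap.coe_mk, Set.IccExtend_apply]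
      exact hγ _
    intro h
    have := congrArg Matrix.det hm
    rw [Matrix.det_mul, Matrix.det_transpose, h, mul_zero, Matrix.det_one] at this
    exact zero_ne_one this
  have hcont : Continuous fun r : ℝ => (γ.extend r).det := γ.continuous_extend.matrix_det
  by_contra h
  have hD0 : D.det < 0 := by
    rcases lt_or_eq_of_le (not_lt.mp h) with h' | h'
    · exact h'
    · exact absurd h' (by simpa using hne 1)
  have h0' : (0:ℝ) ∈ Set.uIcc ((fun r : ℝ => (γ.extend r).det) 0)
      ((fun r : ℝ => (γ.extend r).det) 1) := by
    simp only [Path.extend_zero, Path.extend_one]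
    exact Set.mem_uIcc.mpr (Or.inr ⟨hD0.le, h0.le⟩)
  obtain ⟨r, _, hr⟩ := intermediate_value_uIcc hcont.continuousOn h0'
  exact hne r hr

lemma so_joined {Q : Matrix (Fin d) (Fin d) ℝ} (hQ : Qᵀ * Q = 1) (hdet : 0 < Q.det) :
    JoinedIn {O : Matrix (Fin d) (Fin d) ℝ | Oᵀ * O = 1} Q 1 := by
  rcases Nat.eq_zero_or_pos d with hd | hd
  · have hQ1 : Q = 1 := by
      ext i j
      exact absurd i.isLt (by omega)
    rw [hQ1]
    exact JoinedIn.refl (by simp)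
  · obtain ⟨D, hJ, hfix⟩ := so_iterate (d - 1) (by omega) hQ
    have hD : Dᵀ * D = 1 := hJ.target_mem
    set last : Fin d := ⟨d - 1, by omega⟩ with hlast
    have hlv : (last : ℕ) = d - 1 := rfl
    set z := D *ᵥ eb last with hz
    have hz1 : z ⬝ᵥ z = 1 := by rw [hz, orth_dot hD, eb_self]
    have hzj : ∀ j : Fin d, j ≠ last → z ⬝ᵥ eb j = 0 := by
      intro j hjl
      have hjv : (j : ℕ) < d - 1 := by
        have := j.isLt
        rcases Nat.lt_or_ge (j : ℕ) (d - 1) with h' | h'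
        · exact h'
        · exact absurd (Fin.ext (by omega) : j = last) hjl
      rw [hz]
      conv_lhs => rw [← hfix j hjv]
      rw [orth_dot hD]
      exact eb_ne (Ne.symm hjl)
    have hzval : ∀ j : Fin d, j ≠ last → z j = 0 := by
      intro j hjl
      have := hzj j hjl
      rwa [eb, dotProduct_single, mul_one] at this
    have hDlast : D *ᵥ eb last = z last • eb last := by
      rw [← hz]
      funext j
      by_cases hjl : j = last
      · subst hjl
        simp [eb, Pi.single_eq_same]
      · simp [eb, hzval j hjl, Pi.single_eq_of_ne hjl]
    have hzll : z last * z last = 1 := by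
      have : z ⬝ᵥ z = z last * z last := by
        rw [dotProduct]
        rw [Finset.sum_eq_single last]
        · intro b _ hb
          rw [hzval b hb, zero_mul]
        · intro hb
          exact absurd (Finset.mem_univ last) hb
      rw [← this, hz1]
    have hDdiag : D = Matrix.diagonal (fun j => if j = last then z last else 1) := by
      ext i j
      have hcol : D i j = (D *ᵥ eb j) i := by
        simp [eb, mulVec_single]
      by_cases hjl : j = last
      · subst hjl
        rw [hcol, hDlast]
        by_cases hij : i = last
        · subst hij
          simp [Matrix.diagonal_apply, eb, Pi.single_eq_same]
        · simp [Matrix.diagonal_apply, Ne.symm hij, hij, eb, Pi.single_eq_of_ne hij]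
      · have : (j : ℕ) < d - 1 := by
          have := j.isLt
          rcases Nat.lt_or_ge (j : ℕ) (d - 1) with h' | h'
          · exact h'
          · exact absurd (Fin.ext (by omega) : j = last) hjl
        rw [hcol, hfix j this]
        by_cases hij : i = j
        · subst hij
          simp [Matrix.diagonal_apply, hjl, eb, Pi.single_eq_same]
        · simp [Matrix.diagonal_apply, hij, eb, Pi.single_eq_of_ne (Ne.symm hij)]
    have hdetD : D.det = z last := by
      rw [hDdiag, Matrix.det_diagonal]
      rw [Finset.prod_ite_eq' Finset.univ last (fun _ => z last)]
      simp
    have hDpos : 0 < D.det := joined_det_pos hJ hdet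
    have hzl1 : z last = 1 := by
      rcases mul_self_eq_one_iff.mp hzll with h | h
      · exact h
      · rw [hdetD, h] at hDpos; linarith
    have hD1 : D = 1 := by
      rw [hDdiag, hzl1]
      simp [Matrix.diagonal_one]
    rwa [hD1] at hJ

end SO


section Aux

lemma schur_scalar {n d : ℕ} (hd : 0 < d) (Γ : Subgroup (Equiv.Perm (Fin n)))
    (T : Γ → Matrix (Fin d) (Fin d) ℝ) (hirr : IrredRep Γ T)
    {S : Matrix (Fin d) (Fin d) ℝ} (hsym : Sᵀ = S)
    (hcomm : ∀ φ, S * T φ = T φ * S) : ∃ μ : ℝ, S = μ • 1 := by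
  have hherm : S.IsHermitian := by
    ext i j
    rw [Matrix.conjTranspose_apply, star_trivial]
    exact (congrFun (congrFun hsym j) i).symm
  set j0 : Fin d := ⟨0, hd⟩
  have hx := hherm.mulVec_eigenvectorBasis j0
  set μ := hherm.eigenvalues j0 with hμ
  set x : Fin d → ℝ := (WithLp.equiv 2 (Fin d → ℝ)) (hherm.eigenvectorBasis j0) with hxdef
  have hx0 : x ≠ 0 := by
    intro h
    apply hherm.eigenvectorBasis.orthonormal.ne_zero j0
    exact (WithLp.equiv 2 (Fin d → ℝ)).injective (by simpa [hxdef] using h)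
  set W : Submodule ℝ (Fin d → ℝ) :=
    { carrier := {y | S *ᵥ y = μ • y}
      add_mem' := fun {y} {z} hy hz => by
        simp only [Set.mem_setOf_eq] at *
        rw [Matrix.mulVec_add, hy, hz, smul_add]
      zero_mem' := by simp [Matrix.mulVec_zero]
      smul_mem' := fun cc y hy => by
        simp only [Set.mem_setOf_eq] at *
        rw [Matrix.mulVec_smul, hy]
        exact smul_comm cc μ y } with hWdef
  have hinv : ∀ (φ : Γ), ∀ y ∈ W, T φ *ᵥ y ∈ W := by
    intro φ y hy
    have hy' : S *ᵥ y = μ • y := hy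
    show S *ᵥ (T φ *ᵥ y) = μ • (T φ *ᵥ y)
    rw [Matrix.mulVec_mulVec, hcomm φ, ← Matrix.mulVec_mulVec, hy', Matrix.mulVec_smul]
  rcases hirr W hinv with hbot | htop
  · exfalso
    have hxW : x ∈ W := hx
    rw [hbot] at hxW
    exact hx0 ((Submodule.mem_bot ℝ).mp hxW)
  · refine ⟨μ, ?_⟩
    ext i j
    have hsj : Pi.single j (1:ℝ) ∈ W := htop ▸ Submodule.mem_top
    have hsj' : S *ᵥ (Pi.single j (1:ℝ) : Fin d → ℝ)
        = μ • (Pi.single j (1:ℝ) : Fin d → ℝ) := hsj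
    have h := congrFun hsj' i
    simp only [Matrix.mulVec_single, mul_one, Pi.smul_apply, smul_eq_mul,
      Pi.single_apply, MulOpposite.op_one, one_smul, Matrix.col_apply] at h
    rw [Matrix.smul_apply, Matrix.one_apply, h]
    by_cases hij : i = j <;> simp [hij]

lemma mul_vmv {d : ℕ} (N : Matrix (Fin d) (Fin d) ℝ) (x y : Fin d → ℝ) :
    N * vecMulVec x y = vecMulVec (N *ᵥ x) y := by
  ext i j
  simp only [Matrix.mul_apply, vecMulVec_apply, Matrix.mulVec, dotProduct, Finset.sum_mul]
  exact Finset.sum_congr rfl fun k _ => by ring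

lemma vmv_mulT {d : ℕ} (N : Matrix (Fin d) (Fin d) ℝ) (x y : Fin d → ℝ) :
    vecMulVec x y * Nᵀ = vecMulVec x (N *ᵥ y) := by
  ext i j
  simp only [Matrix.mul_apply, vecMulVec_apply, Matrix.mulVec, dotProduct, Finset.mul_sum,
    Matrix.transpose_apply]
  exact Finset.sum_congr rfl fun k _ => by ring

lemma gram_eq_sum {n d : ℕ} (a b : Fin n → Fin d → ℝ) :
    (arrMat a)ᵀ * arrMat b = ∑ i : Fin n, vecMulVec (a i) (b i) := by
  ext j k
  simp only [Matrix.mul_apply, Matrix.transpose_apply, Matrix.sum_apply, vecMulVec_apply,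
    arrMat, Matrix.of_apply]

lemma act_arrMat {n d : ℕ} (u : Fin n → Fin d → ℝ) (O : Matrix (Fin d) (Fin d) ℝ) :
    arrMat (fun i => O *ᵥ u i) = arrMat u * Oᵀ := by
  ext i j
  simp only [arrMat, Matrix.of_apply, Matrix.mul_apply, Matrix.mulVec, dotProduct,
    Matrix.transpose_apply]
  exact Finset.sum_congr rfl fun k _ => mul_comm _ _

lemma act_mem_sd {n d : ℕ} {Γ : Subgroup (Equiv.Perm (Fin n))} {u : Fin n → Fin d → ℝ}
    {T' : Γ → Matrix (Fin d) (Fin d) ℝ}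
    (huN : IsNormalized u) (hrep : IsRepOf Γ T' u)
    {O : Matrix (Fin d) (Fin d) ℝ} (hO : Oᵀ * O = 1) :
    (fun i => O *ᵥ u i) ∈ SdSet n d Γ := by
  have hOOt : O * Oᵀ = 1 := mul_eq_one_comm.mp hO
  obtain ⟨⟨h'o, h'm⟩, h'a⟩ := hrep
  constructor
  · show IsNormalized _
    unfold IsNormalized
    rw [act_arrMat, Matrix.transpose_mul, Matrix.transpose_transpose,
      show O * (arrMat u)ᵀ * (arrMat u * Oᵀ) = O * ((arrMat u)ᵀ * arrMat u) * Oᵀ by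
        simp only [Matrix.mul_assoc],
      huN, Matrix.mul_one, hOOt]
  · refine ⟨fun φ => O * T' φ * Oᵀ, ⟨⟨fun φ => ?_, fun φ ψ => ?_⟩, fun φ i => ?_⟩⟩
    · show (O * T' φ * Oᵀ)ᵀ * (O * T' φ * Oᵀ) = 1
      have ht : (O * T' φ * Oᵀ)ᵀ = O * (T' φ)ᵀ * Oᵀ := by
        rw [Matrix.transpose_mul, Matrix.transpose_mul, Matrix.transpose_transpose]
        noncomm_ring
      rw [ht, show O * (T' φ)ᵀ * Oᵀ * (O * T' φ * Oᵀ)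
          = O * ((T' φ)ᵀ * ((Oᵀ * O) * T' φ)) * Oᵀ by noncomm_ring,
        hO, Matrix.one_mul, h'o φ, Matrix.mul_one, hOOt]
    · show O * T' (φ * ψ) * Oᵀ = (O * T' φ * Oᵀ) * (O * T' ψ * Oᵀ)
      rw [h'm φ ψ, show (O * T' φ * Oᵀ) * (O * T' ψ * Oᵀ)
          = O * (T' φ * ((Oᵀ * O) * T' ψ)) * Oᵀ by noncomm_ring, hO, Matrix.one_mul]
    · show (O * T' φ * Oᵀ) *ᵥ (O *ᵥ u i) = O *ᵥ u (φ.val i)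
      rw [Matrix.mulVec_mulVec, show O * T' φ * Oᵀ * O = O * T' φ by
        rw [Matrix.mul_assoc (O * T' φ), hO, Matrix.mul_one],
        ← Matrix.mulVec_mulVec, h'a φ i]

lemma joined_act {n d : ℕ} {Γ : Subgroup (Equiv.Perm (Fin n))} {u : Fin n → Fin d → ℝ}
    {T' : Γ → Matrix (Fin d) (Fin d) ℝ}
    (huN : IsNormalized u) (hrep : IsRepOf Γ T' u)
    {O₁ O₂ : Matrix (Fin d) (Fin d) ℝ}
    (hJ : JoinedIn {O : Matrix (Fin d) (Fin d) ℝ | Oᵀ * O = 1} O₁ O₂) :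
    JoinedIn (SdSet n d Γ) (fun i => O₁ *ᵥ u i) (fun i => O₂ *ᵥ u i) := by
  obtain ⟨γ, hγ⟩ := hJ
  refine ⟨⟨⟨fun t => fun i => γ t *ᵥ u i, ?_⟩, ?_, ?_⟩, fun t => act_mem_sd huN hrep (hγ t)⟩
  · apply continuous_pi; intro i; apply continuous_pi; intro j
    show Continuous fun t => ∑ k, γ t j k * u i k
    apply continuous_finset_sum
    intro k _
    exact (((continuous_apply k).comp ((continuous_apply j).comp γ.continuous))).mul
      continuous_const
  · show (fun i => γ 0 *ᵥ u i) = _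
    rw [γ.source]
  · show (fun i => γ 1 *ᵥ u i) = _
    rw [γ.target]

lemma deform_of_joined {n d : ℕ} {Γ : Subgroup (Equiv.Perm (Fin n))}
    {v w : Fin n → Fin d → ℝ} (h : JoinedIn (SdSet n d Γ) v w) : DeformEquiv Γ v w := by
  obtain ⟨γ, hγ⟩ := h
  refine ⟨γ.extend, γ.continuous_extend.continuousOn, fun t _ => ?_, by simp, by simp⟩
  rw [Path.extend, ContinuousMap.coe_mk, Set.IccExtend_apply]
  exact hγ _

lemma leg1 {n d : ℕ} {Γ : Subgroup (Equiv.Perm (Fin n))} {a b : Fin n → Fin d → ℝ}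
    {T : Γ → Matrix (Fin d) (Fin d) ℝ} {ν : ℝ}
    (haN : IsNormalized a) (hbN : IsNormalized b)
    (haR : IsRepOf Γ T a) (hbR : IsRepOf Γ T b)
    (hAB : (arrMat a)ᵀ * arrMat b + ((arrMat a)ᵀ * arrMat b)ᵀ = ν • 1)
    (hν : -2 < ν) : JoinedIn (SdSet n d Γ) a b := by
  obtain ⟨⟨hTo, hTm⟩, hTa⟩ := haR
  obtain ⟨_, hTb⟩ := hbR
  set θ : ℝ → ℝ := fun t => t * (Real.pi / 2) with hθdef
  set g : ℝ → ℝ := fun t => 1 + ν * (Real.cos (θ t) * Real.sin (θ t)) with hgdef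
  set c : ℝ → (Fin n → Fin d → ℝ) := fun t i j =>
    (Real.sqrt (g t))⁻¹ * (Real.cos (θ t) * a i j + Real.sin (θ t) * b i j) with hcdef
  have hπ : 0 < Real.pi / 2 := by positivity
  have hθmem : ∀ t : ℝ, t ∈ Set.Icc (0:ℝ) 1 → 0 ≤ θ t ∧ θ t ≤ Real.pi / 2 := by
    intro t ht
    constructor
    · exact mul_nonneg ht.1 hπ.le
    · calc t * (Real.pi / 2) ≤ 1 * (Real.pi / 2) := mul_le_mul_of_nonneg_right ht.2 hπ.le
        _ = Real.pi / 2 := one_mul _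
  have hco : ∀ t : ℝ, t ∈ Set.Icc (0:ℝ) 1 → 0 ≤ Real.cos (θ t) := by
    intro t ht
    exact Real.cos_nonneg_of_mem_Icc ⟨by linarith [(hθmem t ht).1], (hθmem t ht).2⟩
  have hsi : ∀ t : ℝ, t ∈ Set.Icc (0:ℝ) 1 → 0 ≤ Real.sin (θ t) := by
    intro t ht
    exact Real.sin_nonneg_of_nonneg_of_le_pi (hθmem t ht).1
      (by linarith [(hθmem t ht).2, Real.pi_pos])
  have hcs1 : ∀ t : ℝ, Real.cos (θ t) * Real.cos (θ t) + Real.sin (θ t) * Real.sin (θ t) = 1 := by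
    intro t
    have := Real.sin_sq_add_cos_sq (θ t)
    nlinarith
  have hgt : ∀ t : ℝ, t ∈ Set.Icc (0:ℝ) 1 → 0 < g t := by
    intro t ht
    have h1 := hco t ht
    have h2 := hsi t ht
    have h3 := hcs1 t
    rw [hgdef]
    simp only
    rcases eq_or_lt_of_le (mul_nonneg h1 h2) with hP | hP
    · rw [← hP]
      norm_num
    · nlinarith [mul_lt_mul_of_pos_right hν hP,
        sq_nonneg (Real.cos (θ t) - Real.sin (θ t))]
  have hmem : ∀ t : ℝ, t ∈ Set.Icc (0:ℝ) 1 → c t ∈ SdSet n d Γ := by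
    intro t ht
    set co := Real.cos (θ t) with hcodef
    set si := Real.sin (θ t) with hsidef
    set x := (Real.sqrt (g t))⁻¹ with hxdef
    have hx2 : x * x = (g t)⁻¹ := by
      rw [hxdef, ← mul_inv]
      rw [Real.mul_self_sqrt (hgt t ht).le]
    have harr : arrMat (c t) = x • (co • arrMat a + si • arrMat b) := by
      ext i j
      simp only [arrMat, Matrix.of_apply, Matrix.smul_apply, Matrix.add_apply, smul_eq_mul,
        hcdef]
      rfl
    constructor
    · show IsNormalized (c t)
      unfold IsNormalized
      rw [harr]
      have expand : (x • (co • arrMat a + si • arrMat b))ᵀ * (x • (co • arrMat a + si • arrMat b))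
          = (x*x*(co*co)) • ((arrMat a)ᵀ * arrMat a)
            + ((x*x*(co*si)) • ((arrMat a)ᵀ * arrMat b + (arrMat b)ᵀ * arrMat a))
            + (x*x*(si*si)) • ((arrMat b)ᵀ * arrMat b) := by
        simp only [Matrix.transpose_smul, Matrix.transpose_add, Matrix.add_mul,
          Matrix.mul_add, Matrix.smul_mul, Matrix.mul_smul, smul_smul, smul_add]
        module
      have hAB' : (arrMat a)ᵀ * arrMat b + (arrMat b)ᵀ * arrMat a = ν • 1 := by
        rw [← hAB, Matrix.transpose_mul, Matrix.transpose_transpose]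
      rw [expand, haN, hbN, hAB', smul_smul]
      rw [← add_smul, ← add_smul]
      have hsc : x*x*(co*co) + x*x*(co*si) * ν + x*x*(si*si) = 1 := by
        have h3 : co*co + si*si = 1 := hcs1 t
        have hg : g t = 1 + ν * (co * si) := by rw [hgdef]
        have hgne : g t ≠ 0 := (hgt t ht).ne'
        rw [hx2]
        field_simp
        nlinarith [hg]
      rw [hsc, one_smul]
    · refine ⟨T, ⟨hTo, hTm⟩, fun φ i => ?_⟩
      have hci : ∀ i', c t i' = x • (co • a i' + si • b i') := fun i' => rfl
      rw [hci i, hci (φ.val i), Matrix.mulVec_smul, Matrix.mulVec_add, Matrix.mulVec_smul,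
        Matrix.mulVec_smul, hTa φ i, hTb φ i]
  have h0 : c 0 = a := by
    funext i j
    rw [hcdef]
    simp only [hθdef, hgdef, zero_mul, Real.cos_zero, Real.sin_zero, mul_zero, mul_one,
      add_zero, zero_mul, one_mul, mul_zero, add_zero]
    norm_num
  have h1 : c 1 = b := by
    funext i j
    rw [hcdef]
    simp only [hθdef, hgdef, one_mul, Real.cos_pi_div_two, Real.sin_pi_div_two, mul_zero,
      mul_one, zero_mul, zero_add, mul_zero, add_zero]
    norm_num
  have hgc : Continuous fun s : unitInterval => g (s : ℝ) := by
    apply Continuous.add continuous_const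
    apply Continuous.mul continuous_const
    exact ((Real.continuous_cos.comp (by fun_prop)).mul
      (Real.continuous_sin.comp (by fun_prop)))
  have hinvc : Continuous fun s : unitInterval => (Real.sqrt (g (s : ℝ)))⁻¹ := by
    apply Continuous.inv₀ (Real.continuous_sqrt.comp hgc)
    intro s
    exact (Real.sqrt_pos.mpr (hgt s s.2)).ne'
  have hcont : Continuous fun s : unitInterval => c (s : ℝ) := by
    apply continuous_pi; intro i; apply continuous_pi; intro j
    show Continuous fun s : unitInterval =>
      (Real.sqrt (g (s:ℝ)))⁻¹ * (Real.cos (θ (s:ℝ)) * a i j + Real.sin (θ (s:ℝ)) * b i j)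
    exact hinvc.mul (by fun_prop)
  exact ⟨⟨⟨fun s : unitInterval => c (s : ℝ), hcont⟩, by simpa using h0, by simpa using h1⟩,
    fun s => hmem s s.2⟩

end Aux

theorem stmt7 {n d : ℕ} (Γ : Subgroup (Equiv.Perm (Fin n))) (v w : Fin n → Fin d → ℝ)
    (hv : v ∈ SdSet n d Γ) (hw : w ∈ SdSet n d Γ)
    (T T' : Γ → Matrix (Fin d) (Fin d) ℝ)
    (hT : IsRepOf Γ T v) (hTirr : IrredRep Γ T)
    (hT' : IsRepOf Γ T' w) (hT'irr : IrredRep Γ T')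
    (hne : ¬ AreEquivalent v w)
    (hpos : PosIsoReps Γ T T') :
    DeformEquiv Γ v w := by
  obtain ⟨hvN, -⟩ := hv
  obtain ⟨hwN, -⟩ := hw
  rcases Nat.eq_zero_or_pos d with hd0 | hd
  · exfalso
    apply hne
    refine ⟨1, by simp, fun i => funext fun j => ?_⟩
    exact absurd j.isLt (by omega)
  obtain ⟨⟨hTo, hTm⟩, hTa⟩ := hT
  obtain ⟨⟨hT'o, hT'm⟩, hT'a⟩ := hT'
  have hT1 : T 1 = 1 := by
    have h := hTm 1 1
    rw [one_mul] at h
    calc T 1 = 1 * T 1 := (Matrix.one_mul _).symm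
      _ = ((T 1)ᵀ * T 1) * T 1 := by rw [hTo 1]
      _ = (T 1)ᵀ * (T 1 * T 1) := Matrix.mul_assoc _ _ _
      _ = (T 1)ᵀ * T 1 := by rw [← h]
      _ = 1 := hTo 1
  have hT'1 : T' 1 = 1 := by
    have h := hT'm 1 1
    rw [one_mul] at h
    calc T' 1 = 1 * T' 1 := (Matrix.one_mul _).symm
      _ = ((T' 1)ᵀ * T' 1) * T' 1 := by rw [hT'o 1]
      _ = (T' 1)ᵀ * (T' 1 * T' 1) := Matrix.mul_assoc _ _ _
      _ = (T' 1)ᵀ * T' 1 := by rw [← h]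
      _ = 1 := hT'o 1
  have hTinv : ∀ φ : Γ, T φ⁻¹ = (T φ)ᵀ := by
    intro φ
    have h1 : T φ * T φ⁻¹ = 1 := by rw [← hTm, mul_inv_cancel, hT1]
    calc T φ⁻¹ = 1 * T φ⁻¹ := (Matrix.one_mul _).symm
      _ = ((T φ)ᵀ * T φ) * T φ⁻¹ := by rw [hTo φ]
      _ = (T φ)ᵀ * (T φ * T φ⁻¹) := Matrix.mul_assoc _ _ _
      _ = (T φ)ᵀ := by rw [h1, Matrix.mul_one]
  have hT'inv : ∀ φ : Γ, T' φ⁻¹ = (T' φ)ᵀ := by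
    intro φ
    have h1 : T' φ * T' φ⁻¹ = 1 := by rw [← hT'm, mul_inv_cancel, hT'1]
    calc T' φ⁻¹ = 1 * T' φ⁻¹ := (Matrix.one_mul _).symm
      _ = ((T' φ)ᵀ * T' φ) * T' φ⁻¹ := by rw [hT'o φ]
      _ = (T' φ)ᵀ * (T' φ * T' φ⁻¹) := Matrix.mul_assoc _ _ _
      _ = (T' φ)ᵀ := by rw [h1, Matrix.mul_one]
  obtain ⟨R, hRdet, hRcomm⟩ := hpos
  have hint : ∀ φ : Γ, T φ * Rᵀ = Rᵀ * T' φ := by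
    intro φ
    have h := congrArg Matrix.transpose (hRcomm φ⁻¹)
    rw [Matrix.transpose_mul, Matrix.transpose_mul, hTinv φ, hT'inv φ,
      Matrix.transpose_transpose, Matrix.transpose_transpose] at h
    exact h
  have hCsym : (Rᵀ * R)ᵀ = Rᵀ * R := by
    rw [Matrix.transpose_mul, Matrix.transpose_transpose]
  have hCcomm : ∀ φ : Γ, (Rᵀ * R) * T φ = T φ * (Rᵀ * R) := by
    intro φ
    rw [Matrix.mul_assoc, hRcomm φ, ← Matrix.mul_assoc, ← hint φ, Matrix.mul_assoc]
  obtain ⟨lam, hC⟩ := schur_scalar hd Γ T hTirr hCsym hCcomm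
  set j0 : Fin d := ⟨0, hd⟩ with hj0
  have hlam0 : 0 ≤ lam := by
    have h1 : (Rᵀ * R) j0 j0 = ∑ i, R i j0 * R i j0 := by
      simp [Matrix.mul_apply, Matrix.transpose_apply]
    have h2 : (Rᵀ * R) j0 j0 = lam := by
      rw [hC, Matrix.smul_apply, Matrix.one_apply_eq, smul_eq_mul, mul_one]
    calc (0:ℝ) ≤ ∑ i, R i j0 * R i j0 := Finset.sum_nonneg fun i _ => mul_self_nonneg _
      _ = lam := by rw [← h1, h2]
  have hdd : R.det * R.det = lam ^ d := by
    have h1 : (lam • (1 : Matrix (Fin d) (Fin d) ℝ)).det = lam ^ d := by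
      rw [Matrix.det_smul, Matrix.det_one, Fintype.card_fin, mul_one]
    rw [← h1, ← hC, Matrix.det_mul, Matrix.det_transpose]
  have hlam : 0 < lam := by
    rcases lt_or_eq_of_le hlam0 with h | h
    · exact h
    · exfalso
      rw [← h, zero_pow hd.ne'] at hdd
      nlinarith
  set σ := Real.sqrt lam with hσdef
  have hσ : 0 < σ := Real.sqrt_pos.mpr hlam
  have hσσ : σ * σ = lam := Real.mul_self_sqrt hlam.le
  set Q := σ⁻¹ • R with hQdef
  have hQorth : Qᵀ * Q = 1 := by
    have hsc : σ⁻¹ * σ⁻¹ * lam = 1 := by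
      rw [← hσσ]; field_simp
    rw [hQdef, Matrix.transpose_smul, Matrix.smul_mul, Matrix.mul_smul, hC, smul_smul,
      smul_smul, hsc, one_smul]
  have hQQt : Q * Qᵀ = 1 := mul_eq_one_comm.mp hQorth
  have hQdetpos : 0 < Q.det := by
    rw [hQdef, Matrix.det_smul, Fintype.card_fin]
    exact mul_pos (pow_pos (inv_pos.mpr hσ) d) hRdet
  have hQcomm : ∀ φ : Γ, T φ * Qᵀ = Qᵀ * T' φ := by
    intro φ
    rw [hQdef, Matrix.transpose_smul, Matrix.mul_smul, Matrix.smul_mul, hint φ]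
  set w2 : Fin n → Fin d → ℝ := fun i => Qᵀ *ᵥ w i with hw2def
  have harr2 : arrMat w2 = arrMat w * Q := by
    rw [hw2def, act_arrMat, Matrix.transpose_transpose]
  have hw2N : IsNormalized w2 := by
    unfold IsNormalized
    rw [harr2, Matrix.transpose_mul,
      show Qᵀ * (arrMat w)ᵀ * (arrMat w * Q) = Qᵀ * ((arrMat w)ᵀ * arrMat w) * Q by
        simp only [Matrix.mul_assoc], hwN, Matrix.mul_one, hQorth]
  have hw2a : ∀ (φ : Γ) (i : Fin n), T φ *ᵥ w2 i = w2 (φ.val i) := by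
    intro φ i
    show T φ *ᵥ (Qᵀ *ᵥ w i) = Qᵀ *ᵥ w (φ.val i)
    rw [Matrix.mulVec_mulVec, hQcomm φ, ← Matrix.mulVec_mulVec, hT'a φ i]
  have hw2rep : IsRepOf Γ T w2 := ⟨⟨hTo, hTm⟩, hw2a⟩
  have hne2 : ¬ AreEquivalent v w2 := by
    rintro ⟨X, hXdet, hXv⟩
    apply hne
    refine ⟨Q * X, ?_, fun i => ?_⟩
    · rw [Matrix.det_mul]
      exact mul_ne_zero hQdetpos.ne' hXdet
    · rw [← Matrix.mulVec_mulVec, hXv i]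
      show Q *ᵥ (Qᵀ *ᵥ w i) = w i
      rw [Matrix.mulVec_mulVec, hQQt, Matrix.one_mulVec]
  set A := (arrMat v)ᵀ * arrMat w2 with hAdef
  have hAconj : ∀ φ : Γ, T φ * A * (T φ)ᵀ = A := by
    intro φ
    rw [hAdef, gram_eq_sum, Finset.mul_sum, Finset.sum_mul]
    simp only [mul_vmv, vmv_mulT, hTa, hw2a]
    exact Equiv.sum_comp (φ.val : Equiv.Perm (Fin n)) (fun i => vecMulVec (v i) (w2 i))
  have hAcomm : ∀ φ : Γ, A * T φ = T φ * A := by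
    intro φ
    conv_lhs => rw [← hAconj φ]
    rw [Matrix.mul_assoc (T φ * A), hTo φ, Matrix.mul_one]
  have hSsym : (A + Aᵀ)ᵀ = A + Aᵀ := by
    rw [Matrix.transpose_add, Matrix.transpose_transpose, add_comm]
  have hScomm : ∀ φ : Γ, (A + Aᵀ) * T φ = T φ * (A + Aᵀ) := by
    intro φ
    have h0 := hAcomm φ⁻¹
    rw [hTinv φ] at h0
    have h := congrArg Matrix.transpose h0
    rw [Matrix.transpose_mul A ((T φ)ᵀ), Matrix.transpose_mul ((T φ)ᵀ) A,
      Matrix.transpose_transpose] at h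
    rw [Matrix.add_mul, Matrix.mul_add, hAcomm φ, h]
  obtain ⟨ν, hS⟩ := schur_scalar hd Γ T hTirr hSsym hScomm
  have hνgt : -2 < ν := by
    set N := arrMat v + arrMat w2 with hNdef
    have hNN : Nᵀ * N = (2 + ν) • 1 := by
      have e1 : Nᵀ * N = (arrMat v)ᵀ * arrMat v + (A + Aᵀ) + (arrMat w2)ᵀ * arrMat w2 := by
        rw [hNdef, Matrix.transpose_add, Matrix.add_mul, Matrix.mul_add, Matrix.mul_add,
          hAdef, Matrix.transpose_mul, Matrix.transpose_transpose]
        abel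
      rw [e1, hvN, hw2N, hS]
      module
    have h20 : 0 ≤ 2 + ν := by
      have h1 : (Nᵀ * N) j0 j0 = ∑ i, N i j0 * N i j0 := by
        simp [Matrix.mul_apply, Matrix.transpose_apply]
      have h2 : (Nᵀ * N) j0 j0 = 2 + ν := by
        rw [hNN, Matrix.smul_apply, Matrix.one_apply_eq, smul_eq_mul, mul_one]
      calc (0:ℝ) ≤ ∑ i, N i j0 * N i j0 := Finset.sum_nonneg fun i _ => mul_self_nonneg _
        _ = 2 + ν := by rw [← h1, h2]
    rcases lt_or_eq_of_le h20 with h | h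
    · linarith
    · exfalso
      have hNN0 : Nᵀ * N = 0 := by rw [hNN, ← h, zero_smul]
      have hN0 : ∀ i j, N i j = 0 := by
        intro i j
        have h1 : (Nᵀ * N) j j = ∑ i', N i' j * N i' j := by
          simp [Matrix.mul_apply, Matrix.transpose_apply]
        rw [hNN0] at h1
        have h2 : ∀ i' ∈ Finset.univ, N i' j * N i' j = (0:ℝ) :=
          (Finset.sum_eq_zero_iff_of_nonneg (fun i' _ => mul_self_nonneg (N i' j))).mp
            (by simpa using h1.symm)
        exact mul_self_eq_zero.mp (h2 i (Finset.mem_univ i))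
      apply hne2
      refine ⟨-1, ?_, fun i => ?_⟩
      · have hd1 : ((-1 : Matrix (Fin d) (Fin d) ℝ)).det = (-1 : ℝ) ^ d := by
          rw [show (-1 : Matrix (Fin d) (Fin d) ℝ) = ((-1 : ℝ) • 1) by
            rw [neg_one_smul], Matrix.det_smul, Fintype.card_fin, Matrix.det_one, mul_one]
        rw [hd1]
        exact pow_ne_zero d (by norm_num)
      · rw [Matrix.neg_mulVec, Matrix.one_mulVec]
        funext j
        have h3 : v i j + w2 i j = 0 := by
          have h4 := hN0 i j
          rw [hNdef] at h4
          simpa [arrMat, Matrix.add_apply] using h4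
        show -(v i j) = w2 i j
        linarith
  have hleg1 : JoinedIn (SdSet n d Γ) v w2 :=
    leg1 hvN hw2N ⟨⟨hTo, hTm⟩, hTa⟩ hw2rep (by rw [← hAdef]; exact hS) hνgt
  have hQt : Qᵀᵀ * Qᵀ = 1 := by rw [Matrix.transpose_transpose]; exact hQQt
  have hQtdet : 0 < Qᵀ.det := by rw [Matrix.det_transpose]; exact hQdetpos
  have hleg2 := joined_act hwN ⟨⟨hT'o, hT'm⟩, hT'a⟩ (so_joined hQt hQtdet)
  have hw1 : (fun i => (1 : Matrix (Fin d) (Fin d) ℝ) *ᵥ w i) = w :=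
    funext fun i => Matrix.one_mulVec (w i)
  rw [hw1] at hleg2
  exact deform_of_joined (hleg1.trans hleg2)
end

section
/- Let Γ be a group, let d be even, and let T, T̄ : Γ → O(ℝ^d) be irreducible representations that are isomorphic. Then either every equivariant linear map R between T and T̄ has det R ≤ 0, or every equivariant linear map R between T and T̄ has det R ≥ 0. In particular, any two invertible equivariant maps between T and T̄ have determinants of the same sign. -/
open Matrix

/-- A representation of an abstract group `G` on `ℝ^d` by orthogonal matrices. -/
def IsRepG {d : ℕ} {G : Type*} [Group G] (T : G → Matrix (Fin d) (Fin d) ℝ) : Prop :=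
  (∀ g, (T g)ᵀ * T g = 1) ∧ (∀ g h, T (g * h) = T g * T h)

/-- Irreducibility for a representation of an abstract group. -/
def IrredRepG {d : ℕ} {G : Type*} [Group G] (T : G → Matrix (Fin d) (Fin d) ℝ) : Prop :=
  ∀ W : Submodule ℝ (Fin d → ℝ), (∀ (g : G), ∀ x ∈ W, (T g).mulVec x ∈ W) → W = ⊥ ∨ W = ⊤

/-- Isomorphy of representations of an abstract group. -/
def IsoRepsG {d : ℕ} {G : Type*} [Group G] (T T' : G → Matrix (Fin d) (Fin d) ℝ) : Prop :=
  ∃ R : Matrix (Fin d) (Fin d) ℝ, R.det ≠ 0 ∧ ∀ g, R * T g = T' g * R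

/-- Positive isomorphy of representations of an abstract group. -/
def PosIsoRepsG {d : ℕ} {G : Type*} [Group G] (T T' : G → Matrix (Fin d) (Fin d) ℝ) : Prop :=
  ∃ R : Matrix (Fin d) (Fin d) ℝ, 0 < R.det ∧ ∀ g, R * T g = T' g * R

lemma schur {d : ℕ} {G : Type*} [Group G] {T T' : G → Matrix (Fin d) (Fin d) ℝ}
    (hTirr : IrredRepG T) (R : Matrix (Fin d) (Fin d) ℝ)
    (hR : ∀ g, R * T g = T' g * R) : R = 0 ∨ R.det ≠ 0 := by
  have hinv : ∀ g, ∀ x ∈ LinearMap.ker R.mulVecLin, (T g).mulVec x ∈ LinearMap.ker R.mulVecLin := by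
    intro g x hx
    simp only [LinearMap.mem_ker, mulVecLin_apply] at hx ⊢
    rw [mulVec_mulVec, hR g, ← mulVec_mulVec, hx, mulVec_zero]
  rcases hTirr _ hinv with h | h
  · right
    have hinj : Function.Injective R.mulVec := by
      have := LinearMap.ker_eq_bot.mp h
      exact this
    have := Matrix.mulVec_injective_iff_isUnit.mp hinj
    rw [← isUnit_iff_ne_zero, ← Matrix.isUnit_iff_isUnit_det]
    exact this
  · left
    ext i j
    have : R.mulVec (Pi.single j 1) = 0 := by
      have : (Pi.single j 1 : Fin d → ℝ) ∈ LinearMap.ker R.mulVecLin := h ▸ Submodule.mem_top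
      simpa using this
    have := congrFun this i
    simpa [Matrix.mulVec_single_one] using this

lemma comm_pos_det {d : ℕ} {G : Type*} [Group G] (hd : Even d) (hd0 : d ≠ 0)
    {T : G → Matrix (Fin d) (Fin d) ℝ} (hTirr : IrredRepG T)
    (X : Matrix (Fin d) (Fin d) ℝ) (hX : ∀ g, X * T g = T g * X)
    (hXdet : X.det ≠ 0) : 0 < X.det := by
  by_cases hsc : ∃ c : ℝ, X = c • (1 : Matrix (Fin d) (Fin d) ℝ)
  · obtain ⟨c, rfl⟩ := hsc
    obtain ⟨k, hk⟩ := hd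
    have hdet : (c • (1 : Matrix (Fin d) (Fin d) ℝ)).det = c ^ d := by
      simp [Matrix.det_smul]
    rw [hdet] at hXdet ⊢
    rw [hk, pow_add]
    have h1 : (0:ℝ) ≤ c ^ k * c ^ k := mul_self_nonneg _
    have h2 : c ^ k * c ^ k ≠ 0 := by rw [← pow_add, ← hk]; exact hXdet
    exact lt_of_le_of_ne h1 (Ne.symm h2)
  · set M : ℝ → Matrix (Fin d) (Fin d) ℝ := fun t => t • X + (1 - t) • 1 with hM
    have hMne : ∀ t : ℝ, M t ≠ 0 := by
      intro t h0
      haveI : Nonempty (Fin d) := Fin.pos_iff_nonempty.mp (Nat.pos_of_ne_zero hd0)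
      by_cases ht : t = 0
      · rw [hM] at h0
        simp [ht] at h0
      · apply hsc
        refine ⟨-(1 - t) / t, ?_⟩
        have : t • X = -((1 - t) • (1 : Matrix (Fin d) (Fin d) ℝ)) := by
          rw [hM] at h0; exact eq_neg_of_add_eq_zero_left h0
        have h2 : X = t⁻¹ • (-((1 - t) • (1 : Matrix (Fin d) (Fin d) ℝ))) := by
          rw [← this, smul_smul, inv_mul_cancel₀ ht, one_smul]
        rw [h2, smul_neg, smul_smul]
        rw [neg_div, div_eq_inv_mul]
        simp [neg_smul]
    have hMcomm : ∀ t g, M t * T g = T g * M t := by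
      intro t g
      simp only [hM, Matrix.add_mul, Matrix.mul_add, Matrix.smul_mul, Matrix.mul_smul,
        hX g, Matrix.one_mul, Matrix.mul_one]
    have hMdet : ∀ t : ℝ, (M t).det ≠ 0 := by
      intro t
      rcases schur hTirr (M t) (hMcomm t) with h | h
      · exact absurd h (hMne t)
      · exact h
    have hcont : Continuous fun t => (M t).det := by
      apply Continuous.matrix_det
      fun_prop
    have hf0 : (M 0).det = 1 := by simp [hM]
    have hf1 : (M 1).det = X.det := by simp [hM]
    by_contra hle
    have hneg : X.det < 0 := lt_of_le_of_ne (not_lt.mp hle) hXdet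
    have : (0:ℝ) ∈ Set.Icc ((M 1).det) ((M 0).det) := by
      rw [hf0, hf1]; exact ⟨hneg.le, zero_le_one⟩
    obtain ⟨t, ht, hft⟩ := intermediate_value_Icc' (zero_le_one) hcont.continuousOn this
    exact hMdet t hft

lemma key {d : ℕ} {G : Type*} [Group G] (hd : Even d) (hd0 : d ≠ 0)
    {T T' : G → Matrix (Fin d) (Fin d) ℝ} (hTirr : IrredRepG T)
    (R R' : Matrix (Fin d) (Fin d) ℝ)
    (hR : ∀ g, R * T g = T' g * R) (hR' : ∀ g, R' * T g = T' g * R')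
    (hRdet : R.det ≠ 0) (hR'det : R'.det ≠ 0) : (0 < R.det ↔ 0 < R'.det) := by
  have hRu : IsUnit R.det := isUnit_iff_ne_zero.mpr hRdet
  set X := R⁻¹ * R' with hXdef
  have hXcomm : ∀ g, X * T g = T g * X := by
    intro g
    have h1 : T g * R⁻¹ = R⁻¹ * T' g := by
      have : R * (T g * R⁻¹) = R * (R⁻¹ * T' g) := by
        rw [← Matrix.mul_assoc, hR g, Matrix.mul_assoc, Matrix.mul_nonsing_inv _ hRu,
          ← Matrix.mul_assoc, Matrix.mul_nonsing_inv _ hRu, Matrix.one_mul, Matrix.mul_one]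
      have h2 := congrArg (fun M => R⁻¹ * M) this
      simpa [Matrix.nonsing_inv_mul_cancel_left _ _ hRu] using h2
    calc X * T g = R⁻¹ * (R' * T g) := by rw [hXdef, Matrix.mul_assoc]
      _ = R⁻¹ * (T' g * R') := by rw [hR' g]
      _ = (R⁻¹ * T' g) * R' := by rw [Matrix.mul_assoc]
      _ = (T g * R⁻¹) * R' := by rw [h1]
      _ = T g * X := by rw [Matrix.mul_assoc, hXdef]
  have hXdet : X.det ≠ 0 := by
    rw [hXdef, Matrix.det_mul, Matrix.det_nonsing_inv]
    simp [Ring.inverse_eq_inv']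
    exact ⟨hRdet, hR'det⟩
  have hXpos : 0 < X.det := comm_pos_det hd hd0 hTirr X hXcomm hXdet
  have hfact : R'.det = R.det * X.det := by
    rw [hXdef, ← Matrix.det_mul, Matrix.mul_nonsing_inv_cancel_left _ _ hRu]
  constructor
  · intro h; rw [hfact]; exact mul_pos h hXpos
  · intro h; rw [hfact] at h; nlinarith

theorem stmt9 {d : ℕ} {G : Type*} [Group G] (hd : Even d)
    (T T' : G → Matrix (Fin d) (Fin d) ℝ)
    (hT : IsRepG T) (hTirr : IrredRepG T)
    (hT' : IsRepG T') (hT'irr : IrredRepG T')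
    (hiso : IsoRepsG T T') :
    ((∀ R : Matrix (Fin d) (Fin d) ℝ, (∀ g, R * T g = T' g * R) → R.det ≤ 0) ∨
     (∀ R : Matrix (Fin d) (Fin d) ℝ, (∀ g, R * T g = T' g * R) → 0 ≤ R.det)) ∧
    (∀ R R' : Matrix (Fin d) (Fin d) ℝ,
      (∀ g, R * T g = T' g * R) → (∀ g, R' * T g = T' g * R') →
      R.det ≠ 0 → R'.det ≠ 0 → (0 < R.det ↔ 0 < R'.det)) := by
  by_cases hd0 : d = 0
  · subst hd0
    have hall : ∀ R : Matrix (Fin 0) (Fin 0) ℝ, R.det = 1 := fun R => Matrix.det_fin_zero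
    exact ⟨Or.inr fun R _ => by rw [hall R]; norm_num,
      fun R R' _ _ _ _ => by rw [hall R, hall R']⟩
  · haveI : Nonempty (Fin d) := Fin.pos_iff_nonempty.mp (Nat.pos_of_ne_zero hd0)
    refine ⟨?_, fun R R' hR hR' h1 h2 => key hd hd0 hTirr R R' hR hR' h1 h2⟩
    obtain ⟨R0, hR0det, hR0⟩ := hiso
    rcases hR0det.lt_or_gt with hneg | hpos
    · left
      intro R hR
      rcases schur hTirr R hR with rfl | hdet
      · simp [Matrix.det_zero]
      · have := key hd hd0 hTirr R R0 hR hR0 hdet hR0det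
        have : ¬ (0 < R.det) := fun h => absurd (this.mp h) (not_lt.mpr hneg.le)
        exact not_lt.mp this
    · right
      intro R hR
      rcases schur hTirr R hR with rfl | hdet
      · simp [Matrix.det_zero]
      · exact ((key hd hd0 hTirr R R0 hR hR0 hdet hR0det).mpr hpos).le
end

section
/- Let Γ ⊆ Sym({1,…,n}) be a permutation group, let d be even, let v ∈ S_d(Γ) be irreducible, and let τ ∈ O(ℝ^d) with det τ = −1. Then v and the mirror arrangement τv = (τv_1,…,τv_n) (which again lies in S_d(Γ)) are not deformation equivalent. -/
open Matrix

section AuxLemmas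

open Matrix

lemma arrMat_mulVec_eq {n d : ℕ} (S : Matrix (Fin d) (Fin d) ℝ) (u : Fin n → Fin d → ℝ) :
    arrMat (fun i => S.mulVec (u i)) = arrMat u * Sᵀ := by
  ext i j
  simp only [arrMat, Matrix.of_apply, Matrix.mul_apply, Matrix.mulVec, dotProduct,
    Matrix.transpose_apply]
  exact Finset.sum_congr rfl fun k _ => mul_comm _ _

lemma intertwine_aux {n d : ℕ} (Γ : Subgroup (Equiv.Perm (Fin n)))
    (T₁ T₂ : Γ → Matrix (Fin d) (Fin d) ℝ) (w w' : Fin n → Fin d → ℝ)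
    (h1 : IsRepOf Γ T₁ w) (h2 : IsRepOf Γ T₂ w') (φ : Γ) :
    T₂ φ * ((arrMat w')ᵀ * arrMat w) = ((arrMat w')ᵀ * arrMat w) * T₁ φ := by
  have e2 : arrMat w' * (T₂ φ)ᵀ = arrMat (fun i => w' (φ.val i)) := by
    rw [← arrMat_mulVec_eq]
    exact congrArg arrMat (funext fun i => h2.2 φ i)
  have e1 : arrMat w * (T₁ φ)ᵀ = arrMat (fun i => w (φ.val i)) := by
    rw [← arrMat_mulVec_eq]
    exact congrArg arrMat (funext fun i => h1.2 φ i)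
  have key : T₂ φ * ((arrMat w')ᵀ * arrMat w) * (T₁ φ)ᵀ = (arrMat w')ᵀ * arrMat w := by
    calc T₂ φ * ((arrMat w')ᵀ * arrMat w) * (T₁ φ)ᵀ
        = (arrMat w' * (T₂ φ)ᵀ)ᵀ * (arrMat w * (T₁ φ)ᵀ) := by
          rw [Matrix.transpose_mul, Matrix.transpose_transpose]
          simp only [Matrix.mul_assoc]
      _ = (arrMat (fun i => w' (φ.val i)))ᵀ * arrMat (fun i => w (φ.val i)) := by
          rw [e1, e2]
      _ = (arrMat w')ᵀ * arrMat w := by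
          ext k l
          simp only [Matrix.mul_apply, arrMat, Matrix.transpose_apply, Matrix.of_apply]
          exact Equiv.sum_comp φ.val (fun i => w' i k * w i l)
  calc T₂ φ * ((arrMat w')ᵀ * arrMat w)
      = T₂ φ * ((arrMat w')ᵀ * arrMat w) * ((T₁ φ)ᵀ * T₁ φ) := by
        rw [h1.1.1 φ, mul_one]
    _ = (T₂ φ * ((arrMat w')ᵀ * arrMat w) * (T₁ φ)ᵀ) * T₁ φ := by
        simp only [Matrix.mul_assoc]
    _ = ((arrMat w')ᵀ * arrMat w) * T₁ φ := by rw [key]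

lemma ker_trick {n d : ℕ} (Γ : Subgroup (Equiv.Perm (Fin n)))
    (T : Γ → Matrix (Fin d) (Fin d) ℝ) (hTirr : IrredRep Γ T)
    (B : Matrix (Fin d) (Fin d) ℝ) (hB : ∀ φ : Γ, ∃ M, B * T φ = M * B) :
    B = 0 ∨ B.det ≠ 0 := by
  have hinv : ∀ (φ : Γ), ∀ x ∈ LinearMap.ker B.mulVecLin,
      (T φ).mulVec x ∈ LinearMap.ker B.mulVecLin := by
    intro φ x hx
    obtain ⟨M, hM⟩ := hB φ
    simp only [LinearMap.mem_ker, Matrix.mulVecLin_apply] at hx ⊢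
    rw [Matrix.mulVec_mulVec, hM, ← Matrix.mulVec_mulVec, hx, Matrix.mulVec_zero]
  rcases hTirr _ hinv with h | h
  · right
    intro hdet
    obtain ⟨u, hu, hu0⟩ := (Matrix.exists_mulVec_eq_zero_iff).2 hdet
    have hmem : u ∈ LinearMap.ker B.mulVecLin := by
      simp only [LinearMap.mem_ker, Matrix.mulVecLin_apply]; exact hu0
    rw [h] at hmem
    exact hu (by simpa using hmem)
  · left
    ext i j
    have hmem : (Pi.single j 1 : Fin d → ℝ) ∈ LinearMap.ker B.mulVecLin := by
      rw [h]; trivial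
    have h0 : B.mulVec (Pi.single j 1) = 0 := by
      simpa only [LinearMap.mem_ker, Matrix.mulVecLin_apply] using hmem
    have := congrFun h0 i
    rw [Matrix.mulVec_single_one] at this
    simpa using this

lemma commutant_det_pos {n d : ℕ} (Γ : Subgroup (Equiv.Perm (Fin n)))
    (T : Γ → Matrix (Fin d) (Fin d) ℝ) (hTirr : IrredRep Γ T) (hd : Even d)
    (C : Matrix (Fin d) (Fin d) ℝ) (hC : ∀ φ : Γ, C * T φ = T φ * C) (hC0 : C ≠ 0) :
    0 < C.det := by
  have hdet : C.det ≠ 0 := (ker_trick Γ T hTirr C (fun φ => ⟨T φ, hC φ⟩)).resolve_left hC0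
  rcases hdet.lt_or_gt with hneg | hpos
  · exfalso
    set g : ℝ → ℝ := fun x => (x • (1 : Matrix (Fin d) (Fin d) ℝ) - C).det with hgdef
    have hg : Continuous g := by
      apply Continuous.matrix_det
      exact Continuous.sub (continuous_id.smul continuous_const) continuous_const
    have hg0 : g 0 = C.det := by
      have : g 0 = (-C).det := by simp [hgdef]
      rw [this, Matrix.det_neg, Fintype.card_fin, hd.neg_one_pow, one_mul]
    have hcont : Continuous fun ε : ℝ => ((1 : Matrix (Fin d) (Fin d) ℝ) - ε • C).det := by
      apply Continuous.matrix_det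
      exact Continuous.sub continuous_const (continuous_id.smul continuous_const)
    have hopen : {ε : ℝ | 0 < ((1 : Matrix (Fin d) (Fin d) ℝ) - ε • C).det} ∈ nhds (0:ℝ) := by
      apply (isOpen_lt continuous_const hcont).mem_nhds
      simp
    obtain ⟨r, hrpos, hr⟩ := Metric.mem_nhds_iff.mp hopen
    set ε₀ : ℝ := r/2 with hε₀def
    have hε₀pos : 0 < ε₀ := by positivity
    have hε₀ : 0 < ((1 : Matrix (Fin d) (Fin d) ℝ) - ε₀ • C).det := by
      apply hr
      simp only [Metric.mem_ball, Real.dist_eq, sub_zero]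
      rw [abs_of_pos hε₀pos]; linarith
    set x₀ : ℝ := ε₀⁻¹ with hx₀def
    have hx₀pos : 0 < x₀ := inv_pos.2 hε₀pos
    have hgx₀ : 0 < g x₀ := by
      have hfac : x₀ • (1 : Matrix (Fin d) (Fin d) ℝ) - C
          = x₀ • ((1 : Matrix (Fin d) (Fin d) ℝ) - ε₀ • C) := by
        rw [smul_sub, smul_smul, inv_mul_cancel₀ hε₀pos.ne', one_smul]
      have : g x₀ = x₀ ^ d * ((1 : Matrix (Fin d) (Fin d) ℝ) - ε₀ • C).det := by
        rw [hgdef]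
        simp only []
        rw [hfac, Matrix.det_smul, Fintype.card_fin]
      rw [this]
      exact mul_pos (pow_pos hx₀pos d) hε₀
    have hIVT := intermediate_value_Icc hx₀pos.le hg.continuousOn
    have h0mem : (0:ℝ) ∈ Set.Icc (g 0) (g x₀) := ⟨by rw [hg0]; linarith, hgx₀.le⟩
    obtain ⟨l, _, hgl⟩ := hIVT h0mem
    set D : Matrix (Fin d) (Fin d) ℝ := l • (1 : Matrix (Fin d) (Fin d) ℝ) - C with hDdef
    have hDcomm : ∀ φ : Γ, D * T φ = T φ * D := by
      intro φ
      rw [hDdef, sub_mul, mul_sub, smul_mul_assoc, mul_smul_comm, one_mul, mul_one, hC φ]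
    rcases ker_trick Γ T hTirr D (fun φ => ⟨T φ, hDcomm φ⟩) with hD0 | hDdet
    · have hCl : l • (1 : Matrix (Fin d) (Fin d) ℝ) = C := by
        rwa [hDdef, sub_eq_zero] at hD0
      rw [← hCl, Matrix.det_smul, Fintype.card_fin, Matrix.det_one, mul_one] at hneg
      exact absurd hneg (not_lt.2 (hd.pow_nonneg l))
    · exact hDdet hgl
  · exact hpos

end AuxLemmas
set_option maxHeartbeats 1600000 in
theorem stmt11 {n d : ℕ} (Γ : Subgroup (Equiv.Perm (Fin n))) (hd : Even d)
    (v : Fin n → Fin d → ℝ) (hv : v ∈ SdSet n d Γ)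
    (T : Γ → Matrix (Fin d) (Fin d) ℝ)
    (hT : IsRepOf Γ T v) (hTirr : IrredRep Γ T)
    (τ : Matrix (Fin d) (Fin d) ℝ) (hτ : τᵀ * τ = 1) (hτdet : τ.det = -1) :
    (fun i => τ.mulVec (v i)) ∈ SdSet n d Γ ∧
      ¬ DeformEquiv Γ v (fun i => τ.mulVec (v i)) := by
  classical
  obtain ⟨hnorm, hGamma⟩ := hv
  have hnorm' : (arrMat v)ᵀ * arrMat v = 1 := hnorm
  rcases Nat.eq_zero_or_pos d with hd0 | hdpos
  · exfalso
    subst hd0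
    have : τ.det = 1 := Matrix.det_isEmpty
    rw [this] at hτdet
    norm_num at hτdet
  have hττ : τ * τᵀ = 1 := mul_eq_one_comm.mp hτ
  have hmir : arrMat (fun i => τ.mulVec (v i)) = arrMat v * τᵀ := arrMat_mulVec_eq τ v
  have hmirnorm : IsNormalized (fun i => τ.mulVec (v i)) := by
    show (arrMat (fun i => τ.mulVec (v i)))ᵀ * arrMat (fun i => τ.mulVec (v i)) = 1
    rw [hmir, Matrix.transpose_mul, Matrix.transpose_transpose]
    calc τ * (arrMat v)ᵀ * (arrMat v * τᵀ)
        = τ * ((arrMat v)ᵀ * arrMat v) * τᵀ := by simp only [Matrix.mul_assoc]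
      _ = 1 := by rw [hnorm', mul_one, hττ]
  have hmirrep : IsRepOf Γ (fun φ => τ * T φ * τᵀ) (fun i => τ.mulVec (v i)) := by
    refine ⟨⟨fun φ => ?_, fun φ ψ => ?_⟩, fun φ i => ?_⟩
    · calc (τ * T φ * τᵀ)ᵀ * (τ * T φ * τᵀ)
          = τ * ((T φ)ᵀ * ((τᵀ * τ) * (T φ * τᵀ))) := by
            simp only [Matrix.transpose_mul, Matrix.transpose_transpose, Matrix.mul_assoc]
        _ = τ * (((T φ)ᵀ * T φ) * τᵀ) := by rw [hτ, one_mul, Matrix.mul_assoc]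
        _ = 1 := by rw [hT.1.1 φ, one_mul, hττ]
    · show τ * T (φ * ψ) * τᵀ = (τ * T φ * τᵀ) * (τ * T ψ * τᵀ)
      rw [hT.1.2 φ ψ]
      calc τ * (T φ * T ψ) * τᵀ
          = τ * T φ * ((τᵀ * τ) * (T ψ * τᵀ)) := by
            rw [hτ, one_mul]; simp only [Matrix.mul_assoc]
        _ = (τ * T φ * τᵀ) * (τ * T ψ * τᵀ) := by simp only [Matrix.mul_assoc]
    · rw [Matrix.mulVec_mulVec]
      have : τ * T φ * τᵀ * τ = τ * T φ := by
        rw [Matrix.mul_assoc, hτ, mul_one]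
      rw [this, ← Matrix.mulVec_mulVec, hT.2 φ i]
  refine ⟨⟨hmirnorm, ⟨_, hmirrep⟩⟩, ?_⟩
  rintro ⟨c, hccont, hcmem, hc0, hc1⟩
  -- continuity of the pairing determinant
  have hF : Continuous (fun q : (Fin n → Fin d → ℝ) × (Fin n → Fin d → ℝ) =>
      ((arrMat q.1)ᵀ * arrMat q.2).det) := by
    apply Continuous.matrix_det
    apply Continuous.matrix_mul
    · exact Continuous.matrix_transpose continuous_fst
    · exact continuous_snd
  have hc1' : ContinuousOn (fun p : ℝ × ℝ => c p.1) (Set.Icc 0 1 ×ˢ Set.Icc 0 1) :=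
    hccont.comp continuousOn_fst (fun p hp => hp.1)
  have hc2' : ContinuousOn (fun p : ℝ × ℝ => c p.2) (Set.Icc 0 1 ×ˢ Set.Icc 0 1) :=
    hccont.comp continuousOn_snd (fun p hp => hp.2)
  have hΦcont : ContinuousOn (fun p : ℝ × ℝ => ((arrMat (c p.1))ᵀ * arrMat (c p.2)).det)
      (Set.Icc 0 1 ×ˢ Set.Icc 0 1) :=
    by have h := hF.comp_continuousOn (ContinuousOn.prodMk hc1' hc2'); exact h
  have hUC := ((isCompact_Icc (a := (0:ℝ)) (b := 1)).prod
    (isCompact_Icc (a := (0:ℝ)) (b := 1))).uniformContinuousOn_of_continuous hΦcont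
  rw [Metric.uniformContinuousOn_iff] at hUC
  obtain ⟨δ, hδpos, hδ⟩ := hUC 1 one_pos
  have keypos : ∀ s ∈ Set.Icc (0:ℝ) 1, ∀ t ∈ Set.Icc (0:ℝ) 1, |s - t| < δ →
      0 < ((arrMat (c s))ᵀ * arrMat (c t)).det := by
    intro s hs t ht hst
    have h1 : ((arrMat (c t))ᵀ * arrMat (c t)).det = 1 := by
      have : (arrMat (c t))ᵀ * arrMat (c t) = 1 := (hcmem t ht).1
      rw [this, Matrix.det_one]
    have hd2 : dist ((s, t) : ℝ × ℝ) ((t, t) : ℝ × ℝ) < δ := by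
      rw [Prod.dist_eq]
      simp only [Real.dist_eq, sub_self, abs_zero]
      rw [max_eq_left (abs_nonneg _)]
      exact hst
    have := hδ (s, t) (Set.mem_prod.mpr ⟨hs, ht⟩) (t, t) (Set.mem_prod.mpr ⟨ht, ht⟩) hd2
    simp only [Real.dist_eq] at this
    rw [h1] at this
    have habs := abs_lt.mp this
    linarith [habs.1]
  obtain ⟨N, hN⟩ := exists_nat_gt (1/δ)
  have hNpos : 0 < (N:ℝ) := lt_trans (by positivity) hN
  have hstep : (1:ℝ)/N < δ := by
    rw [div_lt_iff₀ hNpos]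
    rw [div_lt_iff₀ hδpos] at hN
    linarith
  have hmemk : ∀ k : ℕ, k ≤ N → ((k:ℝ)/N) ∈ Set.Icc (0:ℝ) 1 := by
    intro k hk
    constructor
    · positivity
    · rw [div_le_one hNpos]; exact_mod_cast hk
  have chain : ∀ k : ℕ, k ≤ N → ∃ (T' : Γ → Matrix (Fin d) (Fin d) ℝ)
      (B : Matrix (Fin d) (Fin d) ℝ), IsRepOf Γ T' (c ((k:ℝ)/N)) ∧
      (∀ φ, T' φ * B = B * T φ) ∧ 0 < B.det := by
    intro k
    induction k with
    | zero =>
      intro _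
      refine ⟨T, 1, ?_, fun φ => by rw [mul_one, one_mul], by simp⟩
      have h00 : ((0:ℕ):ℝ)/(N:ℝ) = 0 := by norm_num
      rw [h00, hc0]
      exact hT
    | succ k ih =>
      intro hk
      obtain ⟨T', B, hT', hTB, hB⟩ := ih (Nat.le_of_succ_le hk)
      obtain ⟨T'', hT''⟩ := (hcmem _ (hmemk (k+1) hk)).2
      have hint := fun φ => intertwine_aux Γ T' T'' (c ((k:ℝ)/N)) (c (((k+1:ℕ):ℝ)/N)) hT' hT'' φ
      have hApos : 0 < ((arrMat (c (((k+1:ℕ):ℝ)/N)))ᵀ * arrMat (c ((k:ℝ)/N))).det := by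
        apply keypos _ (hmemk (k+1) hk) _ (hmemk k (Nat.le_of_succ_le hk))
        have hdiff : ((k+1:ℕ):ℝ)/N - (k:ℝ)/N = 1/N := by push_cast; ring
        rw [hdiff, abs_of_pos (by positivity)]
        exact hstep
      refine ⟨T'', ((arrMat (c (((k+1:ℕ):ℝ)/N)))ᵀ * arrMat (c ((k:ℝ)/N))) * B, hT'',
        fun φ => ?_, ?_⟩
      · rw [← Matrix.mul_assoc, hint φ, Matrix.mul_assoc, hTB φ]; simp only [Matrix.mul_assoc]
      · rw [Matrix.det_mul]; exact mul_pos hApos hB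
  obtain ⟨T'', B, hT'', hTB, hB⟩ := chain N le_rfl
  have hNN : ((N:ℝ)/(N:ℝ)) = 1 := div_self hNpos.ne'
  rw [hNN, hc1] at hT''
  -- τ intertwines T and T''
  have hAeq : (arrMat (fun i => τ.mulVec (v i)))ᵀ * arrMat v = τ := by
    rw [hmir, Matrix.transpose_mul, Matrix.transpose_transpose, Matrix.mul_assoc, hnorm',
      mul_one]
  have hτA : ∀ φ : Γ, T'' φ * τ = τ * T φ := by
    intro φ
    have := intertwine_aux Γ T T'' v (fun i => τ.mulVec (v i)) hT hT'' φ
    rwa [hAeq] at this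
  -- combine
  have hBunit : IsUnit B.det := isUnit_iff_ne_zero.mpr hB.ne'
  set C : Matrix (Fin d) (Fin d) ℝ := B⁻¹ * τ with hCdef
  have hBi : ∀ φ : Γ, B⁻¹ * T'' φ = T φ * B⁻¹ := by
    intro φ
    calc B⁻¹ * T'' φ = B⁻¹ * T'' φ * (B * B⁻¹) := by
          rw [Matrix.mul_nonsing_inv _ hBunit, mul_one]
      _ = B⁻¹ * (T'' φ * B) * B⁻¹ := by simp only [Matrix.mul_assoc]
      _ = B⁻¹ * (B * T φ) * B⁻¹ := by rw [hTB φ]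
      _ = (B⁻¹ * B) * (T φ * B⁻¹) := by simp only [Matrix.mul_assoc]
      _ = T φ * B⁻¹ := by rw [Matrix.nonsing_inv_mul _ hBunit, one_mul]
  have hCcomm : ∀ φ : Γ, C * T φ = T φ * C := by
    intro φ
    calc C * T φ = B⁻¹ * (τ * T φ) := by rw [hCdef, Matrix.mul_assoc]
      _ = B⁻¹ * (T'' φ * τ) := by rw [hτA φ]
      _ = (B⁻¹ * T'' φ) * τ := by rw [Matrix.mul_assoc]
      _ = T φ * (B⁻¹ * τ) := by rw [hBi φ, Matrix.mul_assoc]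
      _ = T φ * C := by rw [hCdef]
  have hCdet : C.det = B.det⁻¹ * (-1) := by
    rw [hCdef, Matrix.det_mul, Matrix.det_nonsing_inv, hτdet, Ring.inverse_eq_inv']
  have hCne : C ≠ 0 := by
    intro h
    rw [h, (haveI : Nonempty (Fin d) := ⟨⟨0, hdpos⟩⟩; Matrix.det_zero)] at hCdet
    have hBinv : B.det⁻¹ ≠ 0 := inv_ne_zero hB.ne'
    apply hBinv
    linarith [hCdet]
  have hCpos := commutant_det_pos Γ T hTirr hd C hCcomm hCne
  rw [hCdet] at hCpos
  have hBinvpos : 0 < B.det⁻¹ := inv_pos.2 hB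
  nlinarith
end
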